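/- arXiv:2111.05277 — 5 statements merged into one kernel-verified Lean document; each statement's English description precedes it below -/
import Mathlib

section
/- Suppose Y^{(d)} ⊥ D | X, Y^{(d)} ⊥ S | (D, X), and Y = Y^{(d)} on the event {D = d} (no interference). Define γ₀(1,d,x) = E[Y | S=1, D=d, X=x]. Then γ₀(1,d,x) = E[Y^{(d)} | X = x], and consequently E[Y^{(d)}] = E[γ₀(1,d,X)] (the average treatment outcome is identified by the regression on the selected sample averaged over the covariate distribution). -/
open MeasureTheory ProbabilityTheory Filter Set

section Helpers

variable {Ω : Type*} {m : MeasurableSpace Ω} [mΩ : MeasurableSpace Ω] {μ : Measure Ω}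

lemma integral_mul_indicator_one {h : Ω → ℝ} {s : Set Ω} (hs : MeasurableSet s) :
    ∫ ω, h ω * Set.indicator s (fun _ => (1:ℝ)) ω ∂μ = ∫ ω in s, h ω ∂μ := by
  rw [← integral_indicator hs]
  congr 1
  ext ω
  by_cases hω : ω ∈ s <;> simp [hω]

lemma integrable_mul_indicator_one {w : Ω → ℝ} (hw : Integrable w μ) {s : Set Ω}
    (hs : MeasurableSet s) :
    Integrable (fun ω => w ω * Set.indicator s (fun _ => (1:ℝ)) ω) μ := by
  have h : (fun ω => w ω * Set.indicator s (fun _ => (1:ℝ)) ω) = s.indicator w := by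
    ext ω; by_cases hω : ω ∈ s <;> simp [hω]
  rw [h]
  exact hw.indicator hs

lemma integral_mul_condexp [IsFiniteMeasure μ] (hm : m ≤ mΩ)
    {φ ψ : Ω → ℝ} (hφ : StronglyMeasurable[m] φ)
    (hint : Integrable (fun ω => φ ω * ψ ω) μ) (hψ : Integrable ψ μ) :
    ∫ ω, φ ω * ψ ω ∂μ = ∫ ω, φ ω * (μ[ψ|m]) ω ∂μ := by
  have h := condExp_mul_of_stronglyMeasurable_left (μ := μ) hφ hint hψ
  calc ∫ ω, φ ω * ψ ω ∂μ = ∫ ω, (μ[fun ω => φ ω * ψ ω|m]) ω ∂μ :=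
        (integral_condExp (f := fun ω => φ ω * ψ ω) (μ := μ) hm).symm
    _ = ∫ ω, φ ω * (μ[ψ|m]) ω ∂μ := integral_congr_ae h

lemma condexp_indicator_one_nonneg {s : Set Ω} :
    0 ≤ᵐ[μ] μ[Set.indicator s (fun _ => (1:ℝ))|m] :=
  condExp_nonneg (Filter.Eventually.of_forall
    (fun ω => Set.indicator_nonneg (fun _ _ => zero_le_one) ω))

lemma condexp_indicator_one_le_one [IsProbabilityMeasure μ]
    (hm : m ≤ mΩ) {s : Set Ω} (hs : MeasurableSet[mΩ] s) :
    μ[Set.indicator s (fun _ => (1:ℝ))|m] ≤ᵐ[μ] fun _ => (1:ℝ) := by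
  have h1 : (Set.indicator s (fun _ => (1:ℝ))) ≤ᵐ[μ] fun _ => (1:ℝ) :=
    Filter.Eventually.of_forall (fun ω => by by_cases hω : ω ∈ s <;> simp [hω])
  have := condExp_mono (m := m) (μ := μ) ((integrable_const (1:ℝ)).indicator hs) (integrable_const 1) h1
  rwa [condExp_const hm] at this

lemma condexp_indicator_one_norm_le [IsProbabilityMeasure μ]
    (hm : m ≤ mΩ) {s : Set Ω} (hs : MeasurableSet[mΩ] s) :
    ∀ᵐ ω ∂μ, ‖(μ[Set.indicator s (fun _ => (1:ℝ))|m]) ω‖ ≤ 1 := by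
  filter_upwards [condexp_indicator_one_nonneg (μ := μ) (m := m) (s := s),
    condexp_indicator_one_le_one hm hs] with ω h0 h1
  have h0' : (0:ℝ) ≤ (μ[Set.indicator s (fun _ => (1:ℝ))|m]) ω := h0
  rw [Real.norm_eq_abs, abs_le]
  exact ⟨by linarith, h1⟩

lemma integrable_mul_condexp_indicator [IsProbabilityMeasure μ]
    (hm : m ≤ mΩ) {s : Set Ω} (hs : MeasurableSet[mΩ] s) {w : Ω → ℝ} (hw : Integrable w μ) :
    Integrable (fun ω => w ω * (μ[Set.indicator s (fun _ => (1:ℝ))|m]) ω) μ := by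
  have h := hw.bdd_mul (c := 1)
    (stronglyMeasurable_condExp.mono hm).aestronglyMeasurable
    (condexp_indicator_one_norm_le hm hs)
  have heq : (fun ω => w ω * (μ[Set.indicator s (fun _ => (1:ℝ))|m]) ω)
      = fun ω => (μ[Set.indicator s (fun _ => (1:ℝ))|m]) ω * w ω := by
    ext ω; ring
  rw [heq]; exact h

end Helpers
section KeyP

open Filter Topology

variable {Ω β : Type*} {m : MeasurableSpace Ω} [mΩ : MeasurableSpace Ω] [StandardBorelSpace Ω]
  [Nonempty Ω] {μ : Measure Ω} [IsProbabilityMeasure μ]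

lemma setIntegral_condIndepFun (hm : m ≤ mΩ)
    {mβ : MeasurableSpace β} {f : Ω → ℝ} {g : Ω → β}
    (hf : Measurable f) (hg : Measurable g) (hfi : Integrable f μ)
    (hCI : CondIndepFun m hm f g μ) {t : Set β} (ht : MeasurableSet t)
    {C : Set Ω} (hC : MeasurableSet[m] C) :
    ∫ ω in C ∩ g ⁻¹' t, f ω ∂μ
      = ∫ ω in C, (μ[f|m]) ω * (μ[Set.indicator (g ⁻¹' t) (fun _ => (1:ℝ))|m]) ω ∂μ := by
  have hT : MeasurableSet (g ⁻¹' t) := hg ht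
  have hCm : MeasurableSet C := hm _ hC
  set G : Ω → ℝ := μ[Set.indicator (g ⁻¹' t) (fun _ => (1:ℝ))|m] with hG
  -- indicator base case
  have base : ∀ s : Set ℝ, MeasurableSet s →
      ∫ ω in C ∩ g ⁻¹' t, Set.indicator (f ⁻¹' s) (fun _ => (1:ℝ)) ω ∂μ
        = ∫ ω in C, (μ[Set.indicator (f ⁻¹' s) (fun _ => (1:ℝ))|m]) ω * G ω ∂μ := by
    intro s hs
    have hfs : MeasurableSet (f ⁻¹' s) := hf hs
    have hint : Integrable (Set.indicator (f ⁻¹' s ∩ g ⁻¹' t) (fun _ => (1:ℝ))) μ :=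
      (integrable_const 1).indicator (hfs.inter hT)
    have hprod := (condIndepFun_iff_condExp_inter_preimage_eq_mul
      (m' := m) (hm' := hm) (μ := μ) hf hg).mp hCI s t hs ht
    calc ∫ ω in C ∩ g ⁻¹' t, Set.indicator (f ⁻¹' s) (fun _ => (1:ℝ)) ω ∂μ
        = ∫ _ω in (C ∩ g ⁻¹' t) ∩ f ⁻¹' s, (1:ℝ) ∂μ := setIntegral_indicator hfs
      _ = ∫ _ω in C ∩ (f ⁻¹' s ∩ g ⁻¹' t), (1:ℝ) ∂μ := by
          rw [Set.inter_assoc, Set.inter_comm (g ⁻¹' t) (f ⁻¹' s)]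
      _ = ∫ ω in C, Set.indicator (f ⁻¹' s ∩ g ⁻¹' t) (fun _ => (1:ℝ)) ω ∂μ :=
          (setIntegral_indicator (hfs.inter hT)).symm
      _ = ∫ ω in C, (μ[Set.indicator (f ⁻¹' s ∩ g ⁻¹' t) (fun _ => (1:ℝ))|m]) ω ∂μ :=
          (setIntegral_condExp hm hint hC).symm
      _ = ∫ ω in C, (μ[Set.indicator (f ⁻¹' s) (fun _ => (1:ℝ))|m]) ω * G ω ∂μ :=
          setIntegral_congr_ae hCm (hprod.mono fun ω hω _ => hω)
  -- simple function case
  have hsimp : ∀ ψ : SimpleFunc ℝ ℝ,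
      ∫ ω in C ∩ g ⁻¹' t, ψ (f ω) ∂μ
        = ∫ ω in C, (μ[fun ω => ψ (f ω)|m]) ω * G ω ∂μ := by
    intro ψ
    induction ψ using SimpleFunc.induction with
    | @const c s hs =>
      have hco : (fun ω => (SimpleFunc.piecewise s hs (SimpleFunc.const ℝ c)
          (SimpleFunc.const ℝ 0)) (f ω))
          = fun ω => c * Set.indicator (f ⁻¹' s) (fun _ => (1:ℝ)) ω := by
        ext ω
        by_cases hω : f ω ∈ s <;>
          simp [SimpleFunc.piecewise_apply, Set.indicator_apply, Set.mem_preimage, hω]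
      rw [hco]
      have hsm : μ[fun ω => c * Set.indicator (f ⁻¹' s) (fun _ => (1:ℝ)) ω|m]
          =ᵐ[μ] fun ω => c * (μ[Set.indicator (f ⁻¹' s) (fun _ => (1:ℝ))|m]) ω := by
        have := condExp_smul (m := m) (μ := μ) c (Set.indicator (f ⁻¹' s) (fun _ => (1:ℝ)))
        exact this
      calc ∫ ω in C ∩ g ⁻¹' t, c * Set.indicator (f ⁻¹' s) (fun _ => (1:ℝ)) ω ∂μ
          = c * ∫ ω in C ∩ g ⁻¹' t, Set.indicator (f ⁻¹' s) (fun _ => (1:ℝ)) ω ∂μ :=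
            integral_const_mul _ _
        _ = c * ∫ ω in C, (μ[Set.indicator (f ⁻¹' s) (fun _ => (1:ℝ))|m]) ω * G ω ∂μ := by
            rw [base s hs]
        _ = ∫ ω in C, c * ((μ[Set.indicator (f ⁻¹' s) (fun _ => (1:ℝ))|m]) ω * G ω) ∂μ :=
            (integral_const_mul _ _).symm
        _ = ∫ ω in C, (μ[fun ω => c * Set.indicator (f ⁻¹' s) (fun _ => (1:ℝ)) ω|m]) ω * G ω ∂μ := by
            refine setIntegral_congr_ae hCm (hsm.mono fun ω hω _ => ?_)
            rw [hω]; ring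
    | @add ψ₁ ψ₂ _hdisj h₁ h₂ =>
      have hu : Integrable (fun ω => ψ₁ (f ω)) μ := by
        have := (SimpleFunc.integrable_iff (f := ψ₁.comp f hf) (μ := μ)).mpr
          (fun y _ => measure_lt_top μ _)
        rw [SimpleFunc.coe_comp] at this; exact this
      have hv : Integrable (fun ω => ψ₂ (f ω)) μ := by
        have := (SimpleFunc.integrable_iff (f := ψ₂.comp f hf) (μ := μ)).mpr
          (fun y _ => measure_lt_top μ _)
        rw [SimpleFunc.coe_comp] at this; exact this
      have hadd : (fun ω => ((ψ₁ + ψ₂) : SimpleFunc ℝ ℝ) (f ω))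
          = fun ω => ψ₁ (f ω) + ψ₂ (f ω) := by
        ext ω; simp
      rw [hadd]
      have hcadd : μ[fun ω => ψ₁ (f ω) + ψ₂ (f ω)|m]
          =ᵐ[μ] μ[fun ω => ψ₁ (f ω)|m] + μ[fun ω => ψ₂ (f ω)|m] :=
        condExp_add (m := m) (μ := μ) hu hv
      have hint1 : Integrable (fun ω => (μ[fun ω => ψ₁ (f ω)|m]) ω * G ω) μ :=
        integrable_mul_condexp_indicator hm hT integrable_condExp
      have hint2 : Integrable (fun ω => (μ[fun ω => ψ₂ (f ω)|m]) ω * G ω) μ :=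
        integrable_mul_condexp_indicator hm hT integrable_condExp
      calc ∫ ω in C ∩ g ⁻¹' t, (ψ₁ (f ω) + ψ₂ (f ω)) ∂μ
          = (∫ ω in C ∩ g ⁻¹' t, ψ₁ (f ω) ∂μ) + ∫ ω in C ∩ g ⁻¹' t, ψ₂ (f ω) ∂μ :=
            integral_add hu.integrableOn hv.integrableOn
        _ = (∫ ω in C, (μ[fun ω => ψ₁ (f ω)|m]) ω * G ω ∂μ)
              + ∫ ω in C, (μ[fun ω => ψ₂ (f ω)|m]) ω * G ω ∂μ := by rw [h₁, h₂]
        _ = ∫ ω in C, ((μ[fun ω => ψ₁ (f ω)|m]) ω * G ω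
              + (μ[fun ω => ψ₂ (f ω)|m]) ω * G ω) ∂μ :=
            (integral_add hint1.integrableOn hint2.integrableOn).symm
        _ = ∫ ω in C, (μ[fun ω => ψ₁ (f ω) + ψ₂ (f ω)|m]) ω * G ω ∂μ := by
            refine setIntegral_congr_ae hCm (hcadd.mono fun ω hω _ => ?_)
            rw [hω]; simp [Pi.add_apply, add_mul]
  -- approximation
  set ψn : ℕ → SimpleFunc ℝ ℝ :=
    fun n => SimpleFunc.approxOn id measurable_id Set.univ 0 (Set.mem_univ 0) n with hψn
  have htend : ∀ ω, Tendsto (fun n => ψn n (f ω)) atTop (𝓝 (f ω)) := fun ω =>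
    SimpleFunc.tendsto_approxOn measurable_id (Set.mem_univ 0) (by simp)
  have hbd : ∀ n ω, ‖ψn n (f ω)‖ ≤ ‖f ω‖ + ‖f ω‖ := fun n ω =>
    SimpleFunc.norm_approxOn_zero_le measurable_id (Set.mem_univ 0) (f ω) n
  have hbdint : Integrable (fun ω => ‖f ω‖ + ‖f ω‖) μ := hfi.norm.add hfi.norm
  have hintn : ∀ n, Integrable (fun ω => ψn n (f ω)) μ := fun n =>
    Integrable.mono' hbdint ((SimpleFunc.measurable (ψn n)).comp hf).aestronglyMeasurable
      (Filter.Eventually.of_forall (hbd n))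
  -- LHS limit
  have hL : Tendsto (fun n => ∫ ω in C ∩ g ⁻¹' t, ψn n (f ω) ∂μ) atTop
      (𝓝 (∫ ω in C ∩ g ⁻¹' t, f ω ∂μ)) := by
    refine tendsto_integral_of_dominated_convergence (fun ω => ‖f ω‖ + ‖f ω‖)
      (fun n => ((SimpleFunc.measurable (ψn n)).comp hf).aestronglyMeasurable)
      hbdint.restrict (fun n => Filter.Eventually.of_forall (hbd n))
      (Filter.Eventually.of_forall fun ω => htend ω)
  -- RHS limit
  have habs : ∀ n, |(∫ ω in C, (μ[fun ω => ψn n (f ω)|m]) ω * G ω ∂μ)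
      - ∫ ω in C, (μ[f|m]) ω * G ω ∂μ| ≤ ∫ ω, |ψn n (f ω) - f ω| ∂μ := by
    intro n
    have hcsub : μ[fun ω => ψn n (f ω) - f ω|m]
        =ᵐ[μ] μ[fun ω => ψn n (f ω)|m] - μ[f|m] :=
      condExp_sub (m := m) (μ := μ) (hintn n) hfi
    have hint1 : Integrable (fun ω => (μ[fun ω => ψn n (f ω)|m]) ω * G ω) μ :=
      integrable_mul_condexp_indicator hm hT integrable_condExp
    have hint2 : Integrable (fun ω => (μ[f|m]) ω * G ω) μ :=
      integrable_mul_condexp_indicator hm hT integrable_condExp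
    have hdint : Integrable (fun ω => (μ[fun ω => ψn n (f ω) - f ω|m]) ω * G ω) μ :=
      integrable_mul_condexp_indicator hm hT integrable_condExp
    have step1 : (∫ ω in C, (μ[fun ω => ψn n (f ω)|m]) ω * G ω ∂μ)
        - ∫ ω in C, (μ[f|m]) ω * G ω ∂μ
        = ∫ ω in C, (μ[fun ω => ψn n (f ω) - f ω|m]) ω * G ω ∂μ := by
      rw [← integral_sub hint1.integrableOn hint2.integrableOn]
      refine (setIntegral_congr_ae hCm (hcsub.mono fun ω hω _ => ?_)).symm
      rw [hω]; simp [Pi.sub_apply, sub_mul]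
    rw [step1]
    have hGn : ∀ᵐ ω ∂μ, ‖G ω‖ ≤ 1 := condexp_indicator_one_norm_le hm hT
    calc |∫ ω in C, (μ[fun ω => ψn n (f ω) - f ω|m]) ω * G ω ∂μ|
        ≤ ∫ ω in C, |(μ[fun ω => ψn n (f ω) - f ω|m]) ω * G ω| ∂μ := by
          simpa only [Real.norm_eq_abs] using
            norm_integral_le_integral_norm (μ := μ.restrict C)
              (fun ω => (μ[fun ω => ψn n (f ω) - f ω|m]) ω * G ω)
      _ ≤ ∫ ω in C, |(μ[fun ω => ψn n (f ω) - f ω|m]) ω| ∂μ := by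
          refine integral_mono_ae hdint.abs.integrableOn integrable_condExp.abs.integrableOn
            (ae_restrict_of_ae (hGn.mono fun ω hω => ?_))
          simp only [abs_mul]
          calc |(μ[fun ω => ψn n (f ω) - f ω|m]) ω| * |G ω|
              ≤ |(μ[fun ω => ψn n (f ω) - f ω|m]) ω| * 1 := by
                refine mul_le_mul_of_nonneg_left ?_ (abs_nonneg _)
                simpa only [Real.norm_eq_abs] using hω
            _ = _ := mul_one _
      _ ≤ ∫ ω, |(μ[fun ω => ψn n (f ω) - f ω|m]) ω| ∂μ :=
          setIntegral_le_integral integrable_condExp.abs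
            (Filter.Eventually.of_forall fun ω => abs_nonneg _)
      _ ≤ ∫ ω, |ψn n (f ω) - f ω| ∂μ := integral_abs_condExp_le _
  have hto0 : Tendsto (fun n => ∫ ω, |ψn n (f ω) - f ω| ∂μ) atTop (𝓝 0) := by
    have h0 : Tendsto (fun n => ∫ ω, |ψn n (f ω) - f ω| ∂μ) atTop
        (𝓝 (∫ _ω, (0:ℝ) ∂μ)) := by
      refine tendsto_integral_of_dominated_convergence (fun ω => (‖f ω‖ + ‖f ω‖) + ‖f ω‖)
        (fun n => (((SimpleFunc.measurable (ψn n)).comp hf).sub hf).abs.aestronglyMeasurable)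
        (hbdint.add hfi.norm) (fun n => Filter.Eventually.of_forall fun ω => ?_)
        (Filter.Eventually.of_forall fun ω => ?_)
      · rw [Real.norm_eq_abs, abs_abs]
        calc |ψn n (f ω) - f ω| ≤ ‖ψn n (f ω)‖ + ‖f ω‖ := by
              rw [← Real.norm_eq_abs]; exact norm_sub_le _ _
          _ ≤ (‖f ω‖ + ‖f ω‖) + ‖f ω‖ := by have := hbd n ω; linarith
      · have : Tendsto (fun n => ψn n (f ω) - f ω) atTop (𝓝 (f ω - f ω)) :=
          (htend ω).sub tendsto_const_nhds
        simpa using this.abs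
    simpa using h0
  have hR : Tendsto (fun n => ∫ ω in C, (μ[fun ω => ψn n (f ω)|m]) ω * G ω ∂μ) atTop
      (𝓝 (∫ ω in C, (μ[f|m]) ω * G ω ∂μ)) := by
    rw [tendsto_iff_dist_tendsto_zero]
    refine squeeze_zero (fun n => dist_nonneg) (fun n => ?_) hto0
    rw [Real.dist_eq]
    exact habs n
  have heq : (fun n => ∫ ω in C ∩ g ⁻¹' t, ψn n (f ω) ∂μ)
      = fun n => ∫ ω in C, (μ[fun ω => ψn n (f ω)|m]) ω * G ω ∂μ := by
    ext n; exact hsimp (ψn n)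
  rw [heq] at hL
  exact tendsto_nhds_unique hL hR

end KeyP
section KeyQ

open MeasurableSpace

lemma condexp_comap_prod_eq {Ω 𝒟 𝒳 : Type*} [mΩ : MeasurableSpace Ω] [StandardBorelSpace Ω]
    [Nonempty Ω] [m𝒟 : MeasurableSpace 𝒟] [m𝒳 : MeasurableSpace 𝒳]
    {μ : Measure Ω} [IsProbabilityMeasure μ] {Yd : Ω → ℝ} {D : Ω → 𝒟} {X : Ω → 𝒳}
    (hYd : Measurable Yd) (hD : Measurable D) (hX : Measurable X)
    (hYdInt : Integrable Yd μ)
    (hCI1 : CondIndepFun (MeasurableSpace.comap X m𝒳)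
      (MeasurableSpace.comap_le_iff_le_map.mpr hX.le_map) Yd D μ) :
    μ[Yd | MeasurableSpace.comap (fun ω => (D ω, X ω)) inferInstance]
      =ᵐ[μ] μ[Yd | MeasurableSpace.comap X m𝒳] := by
  have hmX : MeasurableSpace.comap X m𝒳 ≤ mΩ :=
    MeasurableSpace.comap_le_iff_le_map.mpr hX.le_map
  have hmDX : MeasurableSpace.comap (fun ω => (D ω, X ω)) inferInstance ≤ mΩ :=
    MeasurableSpace.comap_le_iff_le_map.mpr (hD.prodMk hX).le_map
  have hle : MeasurableSpace.comap X m𝒳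
      ≤ MeasurableSpace.comap (fun ω => (D ω, X ω)) inferInstance := by
    intro s hs
    obtain ⟨v, hv, rfl⟩ := hs
    exact ⟨Prod.snd ⁻¹' v, measurable_snd hv, rfl⟩
  have hp_meas : Measurable (fun ω => (D ω, X ω)) := hD.prodMk hX
  have hE : StronglyMeasurable[MeasurableSpace.comap X m𝒳]
      (μ[Yd|MeasurableSpace.comap X m𝒳]) := stronglyMeasurable_condExp
  have main : ∀ T : Set (𝒟 × 𝒳), MeasurableSet T →
      ∫ ω in (fun ω => (D ω, X ω)) ⁻¹' T, (μ[Yd|MeasurableSpace.comap X m𝒳]) ω ∂μ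
        = ∫ ω in (fun ω => (D ω, X ω)) ⁻¹' T, Yd ω ∂μ := by
    refine MeasurableSpace.induction_on_inter generateFrom_prod.symm isPiSystem_prod ?_ ?_ ?_ ?_
    · simp
    · rintro T ⟨u, hu, v, hv, rfl⟩
      simp only [Set.mem_setOf_eq] at hu hv
      have hpre : (fun ω => (D ω, X ω)) ⁻¹' (u ×ˢ v) = D ⁻¹' u ∩ X ⁻¹' v := by
        ext ω; simp [Set.mem_prod]
      have hvX : MeasurableSet[MeasurableSpace.comap X m𝒳] (X ⁻¹' v) := ⟨v, hv, rfl⟩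
      have huD : MeasurableSet (D ⁻¹' u) := hD hu
      have hvXΩ : MeasurableSet (X ⁻¹' v) := hX hv
      have hrhs : ∫ ω in (fun ω => (D ω, X ω)) ⁻¹' (u ×ˢ v), Yd ω ∂μ
          = ∫ ω in X ⁻¹' v, (μ[Yd|MeasurableSpace.comap X m𝒳]) ω
              * (μ[Set.indicator (D ⁻¹' u) (fun _ => (1:ℝ))|MeasurableSpace.comap X m𝒳]) ω ∂μ := by
        rw [hpre, Set.inter_comm]
        exact setIntegral_condIndepFun hmX hYd hD hYdInt hCI1 hu hvX
      have hφsm : StronglyMeasurable[MeasurableSpace.comap X m𝒳]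
          (Set.indicator (X ⁻¹' v) (μ[Yd|MeasurableSpace.comap X m𝒳])) :=
        hE.indicator hvX
      have hφint : Integrable (Set.indicator (X ⁻¹' v) (μ[Yd|MeasurableSpace.comap X m𝒳])) μ :=
        integrable_condExp.indicator hvXΩ
      have hlhs : ∫ ω in (fun ω => (D ω, X ω)) ⁻¹' (u ×ˢ v),
            (μ[Yd|MeasurableSpace.comap X m𝒳]) ω ∂μ
          = ∫ ω in X ⁻¹' v, (μ[Yd|MeasurableSpace.comap X m𝒳]) ω
              * (μ[Set.indicator (D ⁻¹' u) (fun _ => (1:ℝ))|MeasurableSpace.comap X m𝒳]) ω ∂μ := by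
        have h1 : ∫ ω in (fun ω => (D ω, X ω)) ⁻¹' (u ×ˢ v),
              (μ[Yd|MeasurableSpace.comap X m𝒳]) ω ∂μ
            = ∫ ω, Set.indicator (X ⁻¹' v) (μ[Yd|MeasurableSpace.comap X m𝒳]) ω
                * Set.indicator (D ⁻¹' u) (fun _ => (1:ℝ)) ω ∂μ := by
          rw [integral_mul_indicator_one huD, setIntegral_indicator hvXΩ, hpre,
            Set.inter_comm]
        rw [h1, integral_mul_condexp hmX hφsm
          (integrable_mul_indicator_one hφint huD)
          ((integrable_const 1).indicator huD)]
        rw [← integral_indicator hvXΩ]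
        congr 1
        ext ω
        by_cases hω : ω ∈ X ⁻¹' v <;> simp [hω]
      rw [hlhs, hrhs]
    · intro T hT hTeq
      have h1 : (fun ω => (D ω, X ω)) ⁻¹' Tᶜ = ((fun ω => (D ω, X ω)) ⁻¹' T)ᶜ := rfl
      have hTp : MeasurableSet ((fun ω => (D ω, X ω)) ⁻¹' T) := hp_meas hT
      have htot : ∫ ω, (μ[Yd|MeasurableSpace.comap X m𝒳]) ω ∂μ = ∫ ω, Yd ω ∂μ :=
        integral_condExp hmX
      have h2 := integral_add_compl hTp
        (integrable_condExp (f := Yd) (m := MeasurableSpace.comap X m𝒳)) (μ := μ)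
      have h3 := integral_add_compl hTp hYdInt (μ := μ)
      rw [h1]
      linarith
    · intro F hdisj hFm hFeq
      have h1 : (fun ω => (D ω, X ω)) ⁻¹' (⋃ i, F i)
          = ⋃ i, (fun ω => (D ω, X ω)) ⁻¹' (F i) := Set.preimage_iUnion
      rw [h1, integral_iUnion (fun i => hp_meas (hFm i))
          (fun i j hij => (hdisj hij).preimage _) integrable_condExp.integrableOn,
        integral_iUnion (fun i => hp_meas (hFm i))
          (fun i j hij => (hdisj hij).preimage _) hYdInt.integrableOn]
      exact tsum_congr hFeq
  refine (ae_eq_condExp_of_forall_setIntegral_eq hmDX hYdInt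
    (fun s _ _ => integrable_condExp.integrableOn) (fun s hs _ => ?_)
    (hE.mono hle).aestronglyMeasurable).symm
  obtain ⟨T, hT, rfl⟩ := hs
  exact main T hT

end KeyQ
/-- Static identification: under no interference (`Y = Y⁽ᵈ⁾` on `{D = d}`), conditional
exchangeability (`Y⁽ᵈ⁾ ⊥ D | X` and `Y⁽ᵈ⁾ ⊥ S | (D,X)`) and overlap (the conditional
probability of `{S = 1, D = d}` given `X` is a.s. positive), any version `γ₀` of
`x ↦ E[Y | S=1, D=d, X=x]` satisfies `γ₀(X) = E[Y⁽ᵈ⁾ | X]` a.e., and consequently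
`E[Y⁽ᵈ⁾] = E[γ₀(X)]`. -/
theorem stmt_3 {Ω 𝒟 𝒳 : Type*} [MeasurableSpace Ω] [StandardBorelSpace Ω] [Nonempty Ω]
    [MeasurableSpace 𝒟] [m𝒳 : MeasurableSpace 𝒳] [MeasurableSingletonClass 𝒟]
    (μ : Measure Ω) [IsProbabilityMeasure μ]
    (Y Yd : Ω → ℝ) (S : Ω → Bool) (D : Ω → 𝒟) (X : Ω → 𝒳)
    (hY : Measurable Y) (hYd : Measurable Yd) (hS : Measurable S) (hD : Measurable D)
    (hX : Measurable X) (d : 𝒟)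
    (hYdInt : Integrable Yd μ)
    -- conditional exchangeability: `Y⁽ᵈ⁾ ⊥ D | X`
    (hCI1 : CondIndepFun (MeasurableSpace.comap X m𝒳)
      (MeasurableSpace.comap_le_iff_le_map.mpr hX.le_map) Yd D μ)
    -- conditional exchangeability: `Y⁽ᵈ⁾ ⊥ S | (D, X)`
    (hCI2 : CondIndepFun (MeasurableSpace.comap (fun ω => (D ω, X ω)) inferInstance)
      (MeasurableSpace.comap_le_iff_le_map.mpr (hD.prodMk hX).le_map) Yd S μ)
    -- no interference
    (hni : ∀ ω, D ω = d → Y ω = Yd ω)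
    -- overlap: `P(S = 1, D = d | X) > 0` almost surely
    (hov : ∀ᵐ ω ∂μ,
      0 < (μ[Set.indicator {ω' | S ω' = true ∧ D ω' = d} (fun _ => (1 : ℝ)) |
        MeasurableSpace.comap X m𝒳]) ω)
    -- `γ₀` is a version of `x ↦ E[Y | S = 1, D = d, X = x]`
    (γ₀ : 𝒳 → ℝ) (hγ₀ : Measurable γ₀)
    (hγ₀Int : Integrable (fun ω => γ₀ (X ω)) μ)
    (hver : ∀ B : Set 𝒳, MeasurableSet B →
      ∫ ω in {ω | S ω = true ∧ D ω = d} ∩ X ⁻¹' B, Y ω ∂μ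
        = ∫ ω in {ω | S ω = true ∧ D ω = d} ∩ X ⁻¹' B, γ₀ (X ω) ∂μ) :
    (fun ω => γ₀ (X ω)) =ᵐ[μ] μ[Yd | MeasurableSpace.comap X m𝒳]
      ∧ ∫ ω, Yd ω ∂μ = ∫ ω, γ₀ (X ω) ∂μ := by
  have hmX : MeasurableSpace.comap X m𝒳 ≤ ‹MeasurableSpace Ω› :=
    MeasurableSpace.comap_le_iff_le_map.mpr hX.le_map
  have hmDX : MeasurableSpace.comap (fun ω => (D ω, X ω)) inferInstance
      ≤ ‹MeasurableSpace Ω› :=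
    MeasurableSpace.comap_le_iff_le_map.mpr (hD.prodMk hX).le_map
  have hle : MeasurableSpace.comap X m𝒳
      ≤ MeasurableSpace.comap (fun ω => (D ω, X ω)) inferInstance := by
    intro s hs
    obtain ⟨v, hv, rfl⟩ := hs
    exact ⟨Prod.snd ⁻¹' v, measurable_snd hv, rfl⟩
  set A : Set Ω := {ω | S ω = true ∧ D ω = d} with hAdef
  have hAeq : A = S ⁻¹' {true} ∩ D ⁻¹' {d} := by ext ω; simp [hAdef]
  have hA : MeasurableSet A := by
    rw [hAeq]
    exact (hS (measurableSet_singleton true)).inter (hD (measurableSet_singleton d))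
  have hDd : MeasurableSet (D ⁻¹' {d}) := hD (measurableSet_singleton d)
  have hStrue : MeasurableSet (S ⁻¹' {true}) := hS (measurableSet_singleton true)
  set E : Ω → ℝ := μ[Yd|MeasurableSpace.comap X m𝒳] with hEdef
  set g : Ω → ℝ := μ[Set.indicator A (fun _ => (1:ℝ))|MeasurableSpace.comap X m𝒳] with hgdef
  have hEsm : StronglyMeasurable[MeasurableSpace.comap X m𝒳] E := stronglyMeasurable_condExp
  have hgsm : StronglyMeasurable[MeasurableSpace.comap X m𝒳] g := stronglyMeasurable_condExp
  have hXmX : Measurable[MeasurableSpace.comap X m𝒳] X := fun s hs => ⟨s, hs, rfl⟩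
  have hγXsm : StronglyMeasurable[MeasurableSpace.comap X m𝒳] (fun ω => γ₀ (X ω)) :=
    (hγ₀.comp hXmX).stronglyMeasurable
  have hQ := condexp_comap_prod_eq hYd hD hX hYdInt hCI1
  -- Step 1: identify ∫_{X⁻¹B ∩ A} Yd with ∫_{X⁻¹B} E·g
  have goal1 : ∀ B : Set 𝒳, MeasurableSet B →
      ∫ ω in X ⁻¹' B ∩ A, Yd ω ∂μ = ∫ ω in X ⁻¹' B, E ω * g ω ∂μ := by
    intro B hB
    have hXB : MeasurableSet (X ⁻¹' B) := hX hB
    have hXBmX : MeasurableSet[MeasurableSpace.comap X m𝒳] (X ⁻¹' B) := ⟨B, hB, rfl⟩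
    have hCset : MeasurableSet[MeasurableSpace.comap (fun ω => (D ω, X ω)) inferInstance]
        (D ⁻¹' {d} ∩ X ⁻¹' B) :=
      ⟨{d} ×ˢ B, (measurableSet_singleton d).prod hB, by
        ext ω
        simp only [Set.mem_preimage, Set.mem_prod, Set.mem_singleton_iff, Set.mem_inter_iff]⟩
    have hseteq : X ⁻¹' B ∩ A = (D ⁻¹' {d} ∩ X ⁻¹' B) ∩ S ⁻¹' {true} := by
      ext ω
      simp only [hAdef, Set.mem_inter_iff, Set.mem_preimage, Set.mem_setOf_eq,
        Set.mem_singleton_iff]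
      tauto
    have h2 : ∫ ω in X ⁻¹' B ∩ A, Yd ω ∂μ
        = ∫ ω in D ⁻¹' {d} ∩ X ⁻¹' B,
            (μ[Yd|MeasurableSpace.comap (fun ω => (D ω, X ω)) inferInstance]) ω
              * (μ[Set.indicator (S ⁻¹' {true}) (fun _ => (1:ℝ))|
                  MeasurableSpace.comap (fun ω => (D ω, X ω)) inferInstance]) ω ∂μ := by
      rw [hseteq]
      exact setIntegral_condIndepFun hmDX hYd hS hYdInt hCI2 (measurableSet_singleton true)
        hCset
    have h3 : ∫ ω in D ⁻¹' {d} ∩ X ⁻¹' B,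
            (μ[Yd|MeasurableSpace.comap (fun ω => (D ω, X ω)) inferInstance]) ω
              * (μ[Set.indicator (S ⁻¹' {true}) (fun _ => (1:ℝ))|
                  MeasurableSpace.comap (fun ω => (D ω, X ω)) inferInstance]) ω ∂μ
        = ∫ ω in D ⁻¹' {d} ∩ X ⁻¹' B,
            E ω * (μ[Set.indicator (S ⁻¹' {true}) (fun _ => (1:ℝ))|
                  MeasurableSpace.comap (fun ω => (D ω, X ω)) inferInstance]) ω ∂μ :=
      setIntegral_congr_ae (hDd.inter hXB) (hQ.mono fun ω hω _ => by rw [hω])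
    -- pull-out of the indicator of D⁻¹{d}
    have hfg : (Set.indicator (D ⁻¹' {d}) (fun _ => (1:ℝ)))
          * (Set.indicator (S ⁻¹' {true}) (fun _ => (1:ℝ)))
        = Set.indicator A (fun _ => (1:ℝ)) := by
      ext ω
      by_cases h1 : D ω = d <;> by_cases h2 : S ω = true <;>
        simp [hAdef, Set.indicator_apply, h1, h2]
    have hDdsm : StronglyMeasurable[MeasurableSpace.comap (fun ω => (D ω, X ω)) inferInstance]
        (Set.indicator (D ⁻¹' {d}) (fun _ => (1:ℝ))) := by
      refine stronglyMeasurable_const.indicator ?_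
      exact ⟨{d} ×ˢ Set.univ, (measurableSet_singleton d).prod MeasurableSet.univ, by
        ext ω
        simp only [Set.mem_preimage, Set.mem_prod, Set.mem_singleton_iff, Set.mem_univ,
          and_true]⟩
    have hpull : μ[Set.indicator A (fun _ => (1:ℝ))|
          MeasurableSpace.comap (fun ω => (D ω, X ω)) inferInstance]
        =ᵐ[μ] (Set.indicator (D ⁻¹' {d}) (fun _ => (1:ℝ)))
            * μ[Set.indicator (S ⁻¹' {true}) (fun _ => (1:ℝ))|
                MeasurableSpace.comap (fun ω => (D ω, X ω)) inferInstance] := by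
      have h := condExp_mul_of_stronglyMeasurable_left (μ := μ) hDdsm
        (by rw [hfg]; exact (integrable_const 1).indicator hA)
        ((integrable_const 1).indicator hStrue)
      rw [hfg] at h
      exact h
    -- set integral over D⁻¹{d} ∩ X⁻¹B as a full integral
    set φ : Ω → ℝ := Set.indicator (X ⁻¹' B) E with hφdef
    have hφsm : StronglyMeasurable[MeasurableSpace.comap X m𝒳] φ := hEsm.indicator hXBmX
    have hφint : Integrable φ μ := integrable_condExp.indicator hXB
    have h4 : ∫ ω in D ⁻¹' {d} ∩ X ⁻¹' B,
            E ω * (μ[Set.indicator (S ⁻¹' {true}) (fun _ => (1:ℝ))|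
                  MeasurableSpace.comap (fun ω => (D ω, X ω)) inferInstance]) ω ∂μ
        = ∫ ω, φ ω * (μ[Set.indicator A (fun _ => (1:ℝ))|
                  MeasurableSpace.comap (fun ω => (D ω, X ω)) inferInstance]) ω ∂μ := by
      have ha : ∫ ω in D ⁻¹' {d} ∩ X ⁻¹' B,
            E ω * (μ[Set.indicator (S ⁻¹' {true}) (fun _ => (1:ℝ))|
                  MeasurableSpace.comap (fun ω => (D ω, X ω)) inferInstance]) ω ∂μ
          = ∫ ω, Set.indicator (X ⁻¹' B)
              (fun ω' => E ω' * (μ[Set.indicator (S ⁻¹' {true}) (fun _ => (1:ℝ))|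
                  MeasurableSpace.comap (fun ω => (D ω, X ω)) inferInstance]) ω') ω
              * Set.indicator (D ⁻¹' {d}) (fun _ => (1:ℝ)) ω ∂μ := by
        rw [integral_mul_indicator_one hDd, setIntegral_indicator hXB, Set.inter_comm]
      rw [ha]
      refine integral_congr_ae (hpull.mono fun ω hω => ?_)
      by_cases hmem : ω ∈ X ⁻¹' B
      · simp only [hφdef, Set.indicator_of_mem hmem, hω, Pi.mul_apply]
        ring
      · simp [hφdef, Set.indicator_of_notMem hmem]
    have h5 : ∫ ω, φ ω * (μ[Set.indicator A (fun _ => (1:ℝ))|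
                  MeasurableSpace.comap (fun ω => (D ω, X ω)) inferInstance]) ω ∂μ
        = ∫ ω, φ ω * Set.indicator A (fun _ => (1:ℝ)) ω ∂μ :=
      (integral_mul_condexp hmDX (hφsm.mono hle)
        (integrable_mul_indicator_one hφint hA) ((integrable_const 1).indicator hA)).symm
    have h6 : ∫ ω, φ ω * Set.indicator A (fun _ => (1:ℝ)) ω ∂μ = ∫ ω, φ ω * g ω ∂μ :=
      integral_mul_condexp hmX hφsm (integrable_mul_indicator_one hφint hA)
        ((integrable_const 1).indicator hA)
    have h7 : ∫ ω, φ ω * g ω ∂μ = ∫ ω in X ⁻¹' B, E ω * g ω ∂μ := by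
      rw [← integral_indicator hXB]
      congr 1
      ext ω
      by_cases hmem : ω ∈ X ⁻¹' B <;> simp [hφdef, hmem]
    rw [h2, h3, h4, h5, h6, h7]
  -- Step 2: the same for γ₀ ∘ X
  have goal2 : ∀ B : Set 𝒳, MeasurableSet B →
      ∫ ω in X ⁻¹' B ∩ A, γ₀ (X ω) ∂μ = ∫ ω in X ⁻¹' B, γ₀ (X ω) * g ω ∂μ := by
    intro B hB
    have hXB : MeasurableSet (X ⁻¹' B) := hX hB
    have hXBmX : MeasurableSet[MeasurableSpace.comap X m𝒳] (X ⁻¹' B) := ⟨B, hB, rfl⟩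
    set φ : Ω → ℝ := Set.indicator (X ⁻¹' B) (fun ω => γ₀ (X ω)) with hφdef
    have hφsm : StronglyMeasurable[MeasurableSpace.comap X m𝒳] φ := hγXsm.indicator hXBmX
    have hφint : Integrable φ μ := hγ₀Int.indicator hXB
    have h1 : ∫ ω in X ⁻¹' B ∩ A, γ₀ (X ω) ∂μ
        = ∫ ω, φ ω * Set.indicator A (fun _ => (1:ℝ)) ω ∂μ := by
      rw [integral_mul_indicator_one hA, setIntegral_indicator hXB, Set.inter_comm]
    have h2 : ∫ ω, φ ω * Set.indicator A (fun _ => (1:ℝ)) ω ∂μ = ∫ ω, φ ω * g ω ∂μ :=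
      integral_mul_condexp hmX hφsm (integrable_mul_indicator_one hφint hA)
        ((integrable_const 1).indicator hA)
    have h3 : ∫ ω, φ ω * g ω ∂μ = ∫ ω in X ⁻¹' B, γ₀ (X ω) * g ω ∂μ := by
      rw [← integral_indicator hXB]
      congr 1
      ext ω
      by_cases hmem : ω ∈ X ⁻¹' B <;> simp [hφdef, hmem]
    rw [h1, h2, h3]
  -- Step 3: the regression identity transfers from Y to Yd
  have hbridge : ∀ B : Set 𝒳, MeasurableSet B →
      ∫ ω in X ⁻¹' B ∩ A, Yd ω ∂μ = ∫ ω in X ⁻¹' B ∩ A, γ₀ (X ω) ∂μ := by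
    intro B hB
    have hXB : MeasurableSet (X ⁻¹' B) := hX hB
    have h1 := hver B hB
    have h2 : ∫ ω in A ∩ X ⁻¹' B, Y ω ∂μ = ∫ ω in A ∩ X ⁻¹' B, Yd ω ∂μ :=
      setIntegral_congr_fun (hA.inter hXB) (fun ω hω => hni ω hω.1.2)
    rw [Set.inter_comm]
    rw [h2] at h1
    exact h1
  -- Step 4: uniqueness
  have huniq : (fun ω => E ω * g ω) =ᵐ[μ] fun ω => γ₀ (X ω) * g ω := by
    refine ae_eq_of_forall_setIntegral_eq_of_sigmaFinite' hmX
      (fun s _ _ => (integrable_mul_condexp_indicator hmX hA integrable_condExp).integrableOn)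
      (fun s _ _ => (integrable_mul_condexp_indicator hmX hA hγ₀Int).integrableOn)
      (fun s hs _ => ?_)
      ((hEsm.mul hgsm).aestronglyMeasurable)
      ((hγXsm.mul hgsm).aestronglyMeasurable)
    obtain ⟨B, hB, rfl⟩ := hs
    rw [← goal1 B hB, ← goal2 B hB]
    exact hbridge B hB
  have conc1 : (fun ω => γ₀ (X ω)) =ᵐ[μ] E := by
    filter_upwards [huniq, hov] with ω h1 h2
    exact (mul_right_cancel₀ (ne_of_gt h2) h1).symm
  refine ⟨conc1, ?_⟩
  calc ∫ ω, Yd ω ∂μ = ∫ ω, E ω ∂μ := (integral_condExp hmX).symm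
    _ = ∫ ω, γ₀ (X ω) ∂μ := integral_congr_ae conc1.symm
end

section
/- Mean square continuity under bounded propensities: if P(S=1 | D=d, X) ≥ ε and P(D=d | X) ≥ ε almost surely for some ε > 0, then for any measurable square-integrable function γ, E[γ(1,d,X)²] ≤ ε^{−2} · E[γ(S,D,X)²]. -/
open MeasureTheory

/-- Truncation lemma: a Bochner-integral "version" hypothesis upgrades to a
lintegral/measure identity. -/
lemma aux_meas_eq {Ω 𝒳 : Type*} [MeasurableSpace Ω] [MeasurableSpace 𝒳]
    (μ : Measure Ω) [IsFiniteMeasure μ] (X : Ω → 𝒳) (hX : Measurable X)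
    (A : Set Ω) (ρ : 𝒳 → ℝ) (hρ : Measurable ρ) (hρ0 : ∀ x, 0 ≤ ρ x)
    (hver : ∀ B : Set 𝒳, MeasurableSet B →
      (μ (A ∩ X ⁻¹' B)).toReal = ∫ ω in X ⁻¹' B, ρ (X ω) ∂μ) :
    ∀ B : Set 𝒳, MeasurableSet B →
      μ (A ∩ X ⁻¹' B) = ∫⁻ ω in X ⁻¹' B, ENNReal.ofReal (ρ (X ω)) ∂μ := by
  have hmρX : Measurable fun ω => ENNReal.ofReal (ρ (X ω)) :=
    (hρ.comp hX).ennreal_ofReal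
  -- bounded case
  have bdd : ∀ (C : Set 𝒳), MeasurableSet C → (∀ x ∈ C, ρ x ≤ ((1:ℕ) : ℝ) * C.indicator 1 x ∨ True) → True := fun _ _ _ => trivial
  have key : ∀ (n : ℕ) (C : Set 𝒳), MeasurableSet C → (∀ x ∈ C, ρ x ≤ n) →
      μ (A ∩ X ⁻¹' C) = ∫⁻ ω in X ⁻¹' C, ENNReal.ofReal (ρ (X ω)) ∂μ := by
    intro n C hC hCle
    have hXC : MeasurableSet (X ⁻¹' C) := hX hC
    have hInt : IntegrableOn (fun ω => ρ (X ω)) (X ⁻¹' C) μ := by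
      refine Integrable.mono' (integrable_const (n : ℝ)) ((hρ.comp hX).aestronglyMeasurable) ?_
      refine (ae_restrict_iff' hXC).2 (ae_of_all _ fun ω hω => ?_)
      rw [Real.norm_eq_abs, abs_of_nonneg (hρ0 _)]
      exact hCle _ hω
    have h1 := hver C hC
    have h2 : ENNReal.ofReal (∫ ω in X ⁻¹' C, ρ (X ω) ∂μ)
        = ∫⁻ ω in X ⁻¹' C, ENNReal.ofReal (ρ (X ω)) ∂μ :=
      ofReal_integral_eq_lintegral_ofReal hInt (ae_of_all _ fun ω => hρ0 _)
    rw [← h2, ← h1, ENNReal.ofReal_toReal (measure_ne_top _ _)]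
  intro B hB
  set s : ℕ → Set 𝒳 := fun n => B ∩ ρ ⁻¹' Set.Iic (n : ℝ) with hs
  have hsm : ∀ n, MeasurableSet (s n) := fun n => hB.inter (hρ measurableSet_Iic)
  have hsmono : Monotone s := by
    intro a b hab x hx
    refine ⟨hx.1, ?_⟩
    simp only [Set.mem_preimage, Set.mem_Iic] at hx ⊢
    exact le_trans hx.2 (Nat.cast_le.2 hab)
  have hUnion : ⋃ n, s n = B := by
    ext x
    simp only [hs, Set.mem_iUnion, Set.mem_inter_iff, Set.mem_preimage, Set.mem_Iic]
    constructor
    · rintro ⟨n, hn, -⟩; exact hn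
    · intro hx; exact ⟨⌈ρ x⌉₊, hx, Nat.le_ceil _⟩
  have hseq : ∀ n, μ (A ∩ X ⁻¹' s n) = ∫⁻ ω in X ⁻¹' s n, ENNReal.ofReal (ρ (X ω)) ∂μ := by
    intro n
    exact key n (s n) (hsm n) (fun x hx => hx.2)
  -- continuity from below on both sides
  have hL : μ (A ∩ X ⁻¹' B) = ⨆ n, μ (A ∩ X ⁻¹' s n) := by
    have : A ∩ X ⁻¹' B = ⋃ n, A ∩ X ⁻¹' s n := by
      rw [← hUnion]; simp [Set.preimage_iUnion, Set.inter_iUnion]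
    rw [this]
    have hmono2 : Monotone fun n => A ∩ X ⁻¹' s n := fun a b hab =>
      Set.inter_subset_inter_right _ (Set.preimage_mono (hsmono hab))
    exact Directed.measure_iUnion hmono2.directed_le
  have hR : (∫⁻ ω in X ⁻¹' B, ENNReal.ofReal (ρ (X ω)) ∂μ)
      = ⨆ n, ∫⁻ ω in X ⁻¹' s n, ENNReal.ofReal (ρ (X ω)) ∂μ := by
    have hwd : ∀ (C : Set 𝒳), MeasurableSet C →
        (∫⁻ ω in X ⁻¹' C, ENNReal.ofReal (ρ (X ω)) ∂μ)
          = (μ.withDensity fun ω => ENNReal.ofReal (ρ (X ω))) (X ⁻¹' C) := by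
      intro C hC; rw [withDensity_apply _ (hX hC)]
    rw [hwd B hB]
    have : X ⁻¹' B = ⋃ n, X ⁻¹' s n := by rw [← hUnion]; simp [Set.preimage_iUnion]
    rw [this, Directed.measure_iUnion (Monotone.directed_le fun a b hab => Set.preimage_mono (hsmono hab))]
    exact iSup_congr fun n => (hwd (s n) (hsm n)).symm
  rw [hL, hR]
  exact iSup_congr hseq

/-- From a set-level density identity, extend to lintegrals of `f ∘ X`. -/
lemma aux_lintegral {Ω 𝒳 : Type*} [MeasurableSpace Ω] [MeasurableSpace 𝒳]
    (μ : Measure Ω) (X : Ω → 𝒳) (hX : Measurable X)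
    (A : Set Ω) (g : 𝒳 → ENNReal) (hg : Measurable g)
    (h : ∀ B : Set 𝒳, MeasurableSet B →
      μ (A ∩ X ⁻¹' B) = ∫⁻ ω in X ⁻¹' B, g (X ω) ∂μ)
    (f : 𝒳 → ENNReal) (hf : Measurable f) :
    ∫⁻ ω in A, f (X ω) ∂μ = ∫⁻ ω, g (X ω) * f (X ω) ∂μ := by
  have hmap : Measure.map X (μ.restrict A)
      = Measure.map X (μ.withDensity fun ω => g (X ω)) := by
    ext B hB
    rw [Measure.map_apply hX hB, Measure.map_apply hX hB,
      Measure.restrict_apply (hX hB), withDensity_apply _ (hX hB), Set.inter_comm]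
    exact h B hB
  calc ∫⁻ ω in A, f (X ω) ∂μ
      = ∫⁻ x, f x ∂(Measure.map X (μ.restrict A)) := (lintegral_map hf hX).symm
    _ = ∫⁻ x, f x ∂(Measure.map X (μ.withDensity fun ω => g (X ω))) := by rw [hmap]
    _ = ∫⁻ ω, f (X ω) ∂(μ.withDensity fun ω => g (X ω)) := lintegral_map hf hX
    _ = ∫⁻ ω, g (X ω) * f (X ω) ∂μ :=
        lintegral_withDensity_eq_lintegral_mul μ (hg.comp hX) (hf.comp hX)

/-- Mean square continuity under bounded propensities: if versions `ρ` of
`P(S=1 | D=d, X)` and `π` of `P(D=d | X)` satisfy `ρ, π ≥ ε > 0`, then for any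
measurable square-integrable `γ`, `E[γ(1,d,X)²] ≤ ε⁻² E[γ(S,D,X)²]`. -/
theorem stmt_6 {Ω 𝒟 𝒳 : Type*} [MeasurableSpace Ω] [MeasurableSpace 𝒟] [MeasurableSpace 𝒳]
    [MeasurableSingletonClass 𝒟] [DecidableEq 𝒟]
    (μ : Measure Ω) [IsProbabilityMeasure μ]
    (S : Ω → Bool) (D : Ω → 𝒟) (X : Ω → 𝒳)
    (hS : Measurable S) (hD : Measurable D) (hX : Measurable X) (d : 𝒟)
    (π ρ : 𝒳 → ℝ) (hπ : Measurable π) (hρ : Measurable ρ)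
    (ε : ℝ) (hε : 0 < ε) (hπε : ∀ x, ε ≤ π x) (hρε : ∀ x, ε ≤ ρ x)
    -- `π` is a version of `P(D = d | X)`:
    (hπver : ∀ B : Set 𝒳, MeasurableSet B →
      ∫ ω in X ⁻¹' B, (if D ω = d then (1 : ℝ) else 0) ∂μ
        = ∫ ω in X ⁻¹' B, π (X ω) ∂μ)
    -- `ρ` is a version of `P(S = 1 | D = d, X)`:
    (hρver : ∀ B : Set 𝒳, MeasurableSet B →
      ∫ ω in {ω | D ω = d} ∩ X ⁻¹' B, (if S ω then (1 : ℝ) else 0) ∂μ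
        = ∫ ω in {ω | D ω = d} ∩ X ⁻¹' B, ρ (X ω) ∂μ)
    (γ : Bool × 𝒟 × 𝒳 → ℝ) (hγ : Measurable γ)
    (hγ2 : Integrable (fun ω => γ (S ω, D ω, X ω) ^ 2) μ)
    (hγ2' : Integrable (fun ω => γ (true, d, X ω) ^ 2) μ) :
    ∫ ω, γ (true, d, X ω) ^ 2 ∂μ ≤ ε⁻¹ ^ 2 * ∫ ω, γ (S ω, D ω, X ω) ^ 2 ∂μ := by
  have hAd : MeasurableSet {ω | D ω = d} := hD (measurableSet_singleton d)
  have hAs : MeasurableSet {ω | S ω = true} := hS (measurableSet_singleton true)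
  set Ad : Set Ω := {ω | D ω = d} with hAddef
  set As : Set Ω := {ω | S ω = true} with hAsdef
  -- indicator rewrites
  have hindD : (fun ω => if D ω = d then (1:ℝ) else 0) = Ad.indicator (fun _ => 1) := by
    ext ω; by_cases h : D ω = d <;> simp [hAddef, Set.indicator_apply, h]
  have hindS : (fun ω => if S ω then (1:ℝ) else 0) = As.indicator (fun _ => 1) := by
    ext ω; by_cases h : S ω <;> simp [hAsdef, Set.indicator_apply, h]
  -- version hypotheses in the aux format
  have hπ' : ∀ B : Set 𝒳, MeasurableSet B →
      (μ (Ad ∩ X ⁻¹' B)).toReal = ∫ ω in X ⁻¹' B, π (X ω) ∂μ := by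
    intro B hB
    have h := hπver B hB
    rw [hindD, integral_indicator hAd, setIntegral_const, measureReal_def, Measure.restrict_apply hAd] at h
    simpa using h
  have hρ' : ∀ B : Set 𝒳, MeasurableSet B →
      ((μ.restrict Ad) (As ∩ X ⁻¹' B)).toReal = ∫ ω in X ⁻¹' B, ρ (X ω) ∂(μ.restrict Ad) := by
    intro B hB
    have h := hρver B hB
    rw [hindS, integral_indicator hAs, setIntegral_const, measureReal_def, Measure.restrict_apply hAs] at h
    rw [Measure.restrict_apply (hAs.inter (hX hB)), Measure.restrict_restrict (hX hB)]
    rw [show (As ∩ X ⁻¹' B) ∩ Ad = As ∩ (Ad ∩ X ⁻¹' B) by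
      ext ω; simp only [Set.mem_inter_iff]; tauto]
    rw [show X ⁻¹' B ∩ Ad = Ad ∩ X ⁻¹' B from Set.inter_comm _ _]
    simpa using h
  -- upgrade to lintegral identities
  have hρ0 : ∀ x, (0:ℝ) ≤ ρ x := fun x => le_of_lt (lt_of_lt_of_le hε (hρε x))
  have hπ0 : ∀ x, (0:ℝ) ≤ π x := fun x => le_of_lt (lt_of_lt_of_le hε (hπε x))
  have keyρ := aux_meas_eq (μ.restrict Ad) X hX As ρ hρ hρ0 hρ'
  have keyπ := aux_meas_eq μ X hX Ad π hπ hπ0 hπ'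
  have extρ := aux_lintegral (μ.restrict Ad) X hX As
    (fun x => ENNReal.ofReal (ρ x)) hρ.ennreal_ofReal keyρ
  have extπ := aux_lintegral μ X hX Ad
    (fun x => ENNReal.ofReal (π x)) hπ.ennreal_ofReal keyπ
  -- the function G
  set G : 𝒳 → ENNReal := fun x => ENNReal.ofReal (γ (true, d, x) ^ 2) with hGdef
  have hG : Measurable G := by
    have : Measurable fun x : 𝒳 => γ (true, d, x) :=
      hγ.comp (measurable_const.prodMk (measurable_const.prodMk measurable_id))
    exact (this.pow_const 2).ennreal_ofReal
  have step1 : ∫⁻ ω in As, G (X ω) ∂(μ.restrict Ad)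
      = ∫⁻ ω in Ad, ENNReal.ofReal (ρ (X ω)) * G (X ω) ∂μ := extρ G hG
  have step2 : ∫⁻ ω in Ad, ENNReal.ofReal (ρ (X ω)) * G (X ω) ∂μ
      = ∫⁻ ω, ENNReal.ofReal (π (X ω)) * (ENNReal.ofReal (ρ (X ω)) * G (X ω)) ∂μ :=
    extπ (fun x => ENNReal.ofReal (ρ x) * G x) (hρ.ennreal_ofReal.mul hG)
  have pt : ∀ ω, ENNReal.ofReal ε * (ENNReal.ofReal ε * G (X ω))
      ≤ ENNReal.ofReal (π (X ω)) * (ENNReal.ofReal (ρ (X ω)) * G (X ω)) := fun ω =>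
    mul_le_mul' (ENNReal.ofReal_le_ofReal (hπε _))
      (mul_le_mul' (ENNReal.ofReal_le_ofReal (hρε _)) le_rfl)
  have big : ENNReal.ofReal ε * (ENNReal.ofReal ε * ∫⁻ ω, G (X ω) ∂μ)
      ≤ ∫⁻ ω, ENNReal.ofReal (γ (S ω, D ω, X ω) ^ 2) ∂μ := by
    have hGX : Measurable fun ω => G (X ω) := hG.comp hX
    have hGX2 : Measurable fun ω => ENNReal.ofReal ε * G (X ω) := hGX.const_mul _
    rw [← lintegral_const_mul _ hGX, ← lintegral_const_mul _ hGX2]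
    calc ∫⁻ ω, ENNReal.ofReal ε * (ENNReal.ofReal ε * G (X ω)) ∂μ
        ≤ ∫⁻ ω, ENNReal.ofReal (π (X ω)) * (ENNReal.ofReal (ρ (X ω)) * G (X ω)) ∂μ :=
          lintegral_mono pt
      _ = ∫⁻ ω in Ad, ENNReal.ofReal (ρ (X ω)) * G (X ω) ∂μ := step2.symm
      _ = ∫⁻ ω in As, G (X ω) ∂(μ.restrict Ad) := step1.symm
      _ = ∫⁻ ω in As ∩ Ad, G (X ω) ∂μ := by rw [Measure.restrict_restrict hAs]
      _ = ∫⁻ ω in As ∩ Ad, ENNReal.ofReal (γ (S ω, D ω, X ω) ^ 2) ∂μ := by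
          refine setLIntegral_congr_fun (hAs.inter hAd) (fun ω hω => ?_)
          have h1 : S ω = true := hω.1
          have h2 : D ω = d := hω.2
          simp [hGdef, h1, h2]
      _ ≤ ∫⁻ ω, ENNReal.ofReal (γ (S ω, D ω, X ω) ^ 2) ∂μ :=
          setLIntegral_le_lintegral _ _
  -- convert to real integrals
  have hA' : ∫⁻ ω, G (X ω) ∂μ = ENNReal.ofReal (∫ ω, γ (true, d, X ω) ^ 2 ∂μ) :=
    (ofReal_integral_eq_lintegral_ofReal hγ2' (ae_of_all _ fun ω => sq_nonneg _)).symm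
  have hB' : ∫⁻ ω, ENNReal.ofReal (γ (S ω, D ω, X ω) ^ 2) ∂μ
      = ENNReal.ofReal (∫ ω, γ (S ω, D ω, X ω) ^ 2 ∂μ) :=
    (ofReal_integral_eq_lintegral_ofReal hγ2 (ae_of_all _ fun ω => sq_nonneg _)).symm
  rw [hA', hB', ← ENNReal.ofReal_mul hε.le, ← ENNReal.ofReal_mul hε.le] at big
  have hI1 : (0:ℝ) ≤ ∫ ω, γ (true, d, X ω) ^ 2 ∂μ :=
    integral_nonneg fun ω => sq_nonneg _
  have key : ε * (ε * ∫ ω, γ (true, d, X ω) ^ 2 ∂μ) ≤ ∫ ω, γ (S ω, D ω, X ω) ^ 2 ∂μ := by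
    have := (ENNReal.ofReal_le_ofReal_iff (integral_nonneg fun ω => sq_nonneg _)).1 big
    linarith
  have hε2 : (0:ℝ) < ε ^ 2 := pow_pos hε 2
  calc ∫ ω, γ (true, d, X ω) ^ 2 ∂μ
      = ε⁻¹ ^ 2 * (ε * (ε * ∫ ω, γ (true, d, X ω) ^ 2 ∂μ)) := by
        field_simp
    _ ≤ ε⁻¹ ^ 2 * ∫ ω, γ (S ω, D ω, X ω) ^ 2 ∂μ :=
        mul_le_mul_of_nonneg_left key (by positivity)
end

section
/- Dynamic (sequential) identification: suppose Y^{(d)} ⊥ D | X and Y^{(d)} ⊥ S | (D, X, M), and Y = Y^{(d)} on {D = d}. Define γ₀(1,d,x,m) = E[Y | S=1, D=d, X=x, M=m]. Then E[Y^{(d)} | X = x] = ∫ γ₀(1,d,x,m) dP(m | D=d, X=x), and hence E[Y^{(d)}] = ∫∫ γ₀(1,d,x,m) dP(m | d, x) dP(x). -/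
open MeasureTheory ProbabilityTheory


/-- Pull-out helper: for `m'`-strongly-measurable integrable `ψ`, `A ∈ m'`, measurable `t'`,
`∫_{A∩t'} ψ = ∫_A ψ · E[1_{t'}|m']`. -/
lemma pullout_aux {Ω : Type*} {m' m0 : MeasurableSpace Ω} (hm' : m' ≤ m0)
    (μ : Measure Ω) [IsProbabilityMeasure μ]
    {ψ : Ω → ℝ} (hψm : StronglyMeasurable[m'] ψ) (hψInt : Integrable ψ μ)
    {t' : Set Ω} (ht' : MeasurableSet[m0] t') {A : Set Ω} (hA : MeasurableSet[m'] A) :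
    ∫ ω in A ∩ t', ψ ω ∂μ
      = ∫ ω in A, ψ ω * (μ[t'.indicator (fun _ => (1 : ℝ))|m']) ω ∂μ := by
  haveI : SigmaFinite (μ.trim hm') := by infer_instance
  have hindInt : Integrable (t'.indicator (fun _ => (1 : ℝ))) μ :=
    (integrable_const (1 : ℝ)).indicator ht'
  have hmul : ψ * t'.indicator (fun _ => (1 : ℝ)) = t'.indicator ψ := by
    ext ω
    by_cases hω : ω ∈ t' <;> simp [hω]
  have h1 : Integrable (ψ * t'.indicator (fun _ => (1 : ℝ))) μ := by
    rw [hmul]; exact hψInt.indicator ht'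
  calc ∫ ω in A ∩ t', ψ ω ∂μ
      = ∫ ω in A, t'.indicator ψ ω ∂μ := (setIntegral_indicator ht').symm
    _ = ∫ ω in A, (ψ * t'.indicator (fun _ => (1 : ℝ))) ω ∂μ := by rw [hmul]
    _ = ∫ ω in A, (μ[ψ * t'.indicator (fun _ => (1 : ℝ))|m']) ω ∂μ :=
        (setIntegral_condExp hm' h1 hA).symm
    _ = ∫ ω in A, (ψ * μ[t'.indicator (fun _ => (1 : ℝ))|m']) ω ∂μ := by
        refine integral_congr_ae (ae_restrict_of_ae ?_)
        exact condExp_mul_of_stronglyMeasurable_left hψm h1 hindInt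
    _ = ∫ ω in A, ψ ω * (μ[t'.indicator (fun _ => (1 : ℝ))|m']) ω ∂μ := rfl

/-- Key lemma: if `f ⊥ g | m'`, then for `A ∈ m'` and measurable `t`,
`∫_{A ∩ g⁻¹t} f = ∫_{A ∩ g⁻¹t} E[f|m']`. -/
lemma condIndep_setIntegral_eq {Ω β : Type*} {m' : MeasurableSpace Ω}
    {m0 : MeasurableSpace Ω} [StandardBorelSpace Ω] [Nonempty Ω]
    {mβ : MeasurableSpace β} (hm' : m' ≤ m0)
    (μ : Measure Ω) [IsProbabilityMeasure μ]
    {f : Ω → ℝ} {g : Ω → β} (hf : Measurable f) (hg : Measurable g)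
    (hCI : CondIndepFun m' hm' f g μ) (hfInt : Integrable f μ)
    {t : Set β} (ht : MeasurableSet t) {A : Set Ω} (hA : MeasurableSet[m'] A) :
    ∫ ω in A ∩ g ⁻¹' t, f ω ∂μ = ∫ ω in A ∩ g ⁻¹' t, (μ[f|m']) ω ∂μ := by
  haveI : SigmaFinite (μ.trim hm') := by infer_instance
  set t' : Set Ω := g ⁻¹' t with ht'def
  have ht' : MeasurableSet[m0] t' := hg ht
  have hCI' := (condIndepFun_iff m' hm' f g hf hg μ).mp hCI
  -- the predicate
  set P : (Ω → ℝ) → Prop :=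
    fun φ => ∫ ω in A ∩ t', φ ω ∂μ = ∫ ω in A ∩ t', (μ[φ|m']) ω ∂μ with hP
  have hmf : MeasurableSpace.comap f inferInstance ≤ m0 := hf.comap_le
  have hfmf : Measurable[MeasurableSpace.comap f inferInstance] f :=
    Measurable.of_comap_le le_rfl
  have hmain : P f := by
    refine MemLp.induction_stronglyMeasurable hmf (ENNReal.one_ne_top) P ?_ ?_ ?_ ?_
      (memLp_one_iff_integrable.mpr hfInt) hfmf.stronglyMeasurable.aestronglyMeasurable
    · -- indicators
      rintro c s ⟨u, hu, rfl⟩ -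
      have hs : MeasurableSet[m0] (f ⁻¹' u) := hf hu
      have hind : ((f ⁻¹' u).indicator fun _ => c)
          = c • (f ⁻¹' u).indicator (fun _ => (1 : ℝ)) := by
        ext ω; by_cases hω : ω ∈ f ⁻¹' u <;> simp [hω]
      have hindInt : Integrable ((f ⁻¹' u).indicator (fun _ => (1 : ℝ))) μ :=
        (integrable_const (1 : ℝ)).indicator hs
      have hbase : ∫ ω in A ∩ t', (f ⁻¹' u).indicator (fun _ => (1 : ℝ)) ω ∂μ
          = ∫ ω in A ∩ t', (μ[(f ⁻¹' u).indicator (fun _ => (1 : ℝ))|m']) ω ∂μ := by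
        have hprod := hCI' (f ⁻¹' u) t' ⟨u, hu, rfl⟩ ⟨t, ht, rfl⟩
        calc ∫ ω in A ∩ t', (f ⁻¹' u).indicator (fun _ => (1 : ℝ)) ω ∂μ
            = ∫ ω in (A ∩ t') ∩ f ⁻¹' u, (1 : ℝ) ∂μ := setIntegral_indicator hs
          _ = (μ ((A ∩ t') ∩ f ⁻¹' u)).toReal := by
              rw [setIntegral_const]; simp [Measure.real]
          _ = (μ (A ∩ (f ⁻¹' u ∩ t'))).toReal := by
              rw [show (A ∩ t') ∩ f ⁻¹' u = A ∩ (f ⁻¹' u ∩ t') by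
                ext ω; simp [and_comm, and_assoc, and_left_comm]]
          _ = ∫ ω in A ∩ (f ⁻¹' u ∩ t'), (1 : ℝ) ∂μ := by
              rw [setIntegral_const]; simp [Measure.real]
          _ = ∫ ω in A, (f ⁻¹' u ∩ t').indicator (fun _ => (1 : ℝ)) ω ∂μ :=
              (setIntegral_indicator (hs.inter ht')).symm
          _ = ∫ ω in A, (μ[(f ⁻¹' u ∩ t').indicator (fun _ => (1 : ℝ))|m']) ω ∂μ :=
              (setIntegral_condExp hm' ((integrable_const (1 : ℝ)).indicator (hs.inter ht')) hA).symm
          _ = ∫ ω in A, ((μ[(f ⁻¹' u).indicator (fun _ => (1 : ℝ))|m'])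
                * (μ[t'.indicator (fun _ => (1 : ℝ))|m'])) ω ∂μ := by
              refine integral_congr_ae (ae_restrict_of_ae ?_)
              exact hprod
          _ = ∫ ω in A, (μ[(f ⁻¹' u).indicator (fun _ => (1 : ℝ))|m']) ω
                * (μ[t'.indicator (fun _ => (1 : ℝ))|m']) ω ∂μ := rfl
          _ = ∫ ω in A ∩ t', (μ[(f ⁻¹' u).indicator (fun _ => (1 : ℝ))|m']) ω ∂μ :=
              (pullout_aux hm' μ stronglyMeasurable_condExp integrable_condExp ht' hA).symm
      show ∫ ω in A ∩ t', ((f ⁻¹' u).indicator fun _ => c) ω ∂μ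
          = ∫ ω in A ∩ t', (μ[(f ⁻¹' u).indicator fun _ => c|m']) ω ∂μ
      rw [hind]
      calc ∫ ω in A ∩ t', (c • (f ⁻¹' u).indicator (fun _ => (1 : ℝ))) ω ∂μ
          = c • ∫ ω in A ∩ t', (f ⁻¹' u).indicator (fun _ => (1 : ℝ)) ω ∂μ :=
            integral_smul c _
        _ = c • ∫ ω in A ∩ t', (μ[(f ⁻¹' u).indicator (fun _ => (1 : ℝ))|m']) ω ∂μ := by
            rw [hbase]
        _ = ∫ ω in A ∩ t', (c • (μ[(f ⁻¹' u).indicator (fun _ => (1 : ℝ))|m'])) ω ∂μ :=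
            (integral_smul c _).symm
        _ = ∫ ω in A ∩ t', (μ[c • (f ⁻¹' u).indicator (fun _ => (1 : ℝ))|m']) ω ∂μ := by
            refine integral_congr_ae (ae_restrict_of_ae ?_)
            exact (condExp_smul c _ m').symm
    · -- additivity
      intro φ₁ φ₂ _ hφ₁ hφ₂ _ _ hPφ₁ hPφ₂
      have h₁ : Integrable φ₁ μ := memLp_one_iff_integrable.mp hφ₁
      have h₂ : Integrable φ₂ μ := memLp_one_iff_integrable.mp hφ₂
      show ∫ ω in A ∩ t', (φ₁ + φ₂) ω ∂μ = ∫ ω in A ∩ t', (μ[φ₁ + φ₂|m']) ω ∂μ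
      calc ∫ ω in A ∩ t', (φ₁ + φ₂) ω ∂μ
          = ∫ ω in A ∩ t', φ₁ ω ∂μ + ∫ ω in A ∩ t', φ₂ ω ∂μ :=
            integral_add h₁.integrableOn h₂.integrableOn
        _ = ∫ ω in A ∩ t', (μ[φ₁|m']) ω ∂μ + ∫ ω in A ∩ t', (μ[φ₂|m']) ω ∂μ := by
            rw [hPφ₁, hPφ₂]
        _ = ∫ ω in A ∩ t', ((μ[φ₁|m']) + (μ[φ₂|m'])) ω ∂μ :=
            (integral_add integrable_condExp.integrableOn integrable_condExp.integrableOn).symm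
        _ = ∫ ω in A ∩ t', (μ[φ₁ + φ₂|m']) ω ∂μ := by
            refine integral_congr_ae (ae_restrict_of_ae ?_)
            exact (condExp_add h₁ h₂ m').symm
    · -- closedness
      have hcont1 : Continuous fun φ : lpMeas ℝ ℝ (MeasurableSpace.comap f inferInstance) 1 μ =>
          ∫ ω in A ∩ t', (φ : Ω → ℝ) ω ∂μ := by
        change Continuous ((fun ψ : Lp ℝ 1 μ => ∫ ω in A ∩ t', ψ ω ∂μ) ∘
          (Submodule.subtypeL _))
        exact (continuous_setIntegral _).comp (ContinuousLinearMap.continuous _)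
      have hcont2 : Continuous fun φ : lpMeas ℝ ℝ (MeasurableSpace.comap f inferInstance) 1 μ =>
          ∫ ω in A ∩ t', (condExpL1CLM ℝ hm' μ (φ : Lp ℝ 1 μ) : Ω → ℝ) ω ∂μ := by
        change Continuous ((fun ψ : Lp ℝ 1 μ => ∫ ω in A ∩ t', ψ ω ∂μ) ∘
          ((condExpL1CLM ℝ hm' μ).comp (Submodule.subtypeL _)))
        exact (continuous_setIntegral _).comp (ContinuousLinearMap.continuous _)
      have hre : ∀ φ : lpMeas ℝ ℝ (MeasurableSpace.comap f inferInstance) 1 μ,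
          ∫ ω in A ∩ t', (μ[(φ : Ω → ℝ)|m']) ω ∂μ
            = ∫ ω in A ∩ t', (condExpL1CLM ℝ hm' μ (φ : Lp ℝ 1 μ) : Ω → ℝ) ω ∂μ := by
        intro φ
        refine integral_congr_ae (ae_restrict_of_ae ?_)
        refine (condExp_ae_eq_condExpL1 hm' _).trans ?_
        rw [condExpL1_eq (L1.integrable_coeFn _), Integrable.toL1_coeFn]
      have hsets : {φ : lpMeas ℝ ℝ (MeasurableSpace.comap f inferInstance) 1 μ | P φ}
          = {φ : lpMeas ℝ ℝ (MeasurableSpace.comap f inferInstance) 1 μ |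
              (∫ ω in A ∩ t', (φ : Ω → ℝ) ω ∂μ)
              = ∫ ω in A ∩ t', (condExpL1CLM ℝ hm' μ (φ : Lp ℝ 1 μ) : Ω → ℝ) ω ∂μ} := by
        ext φ
        simp only [Set.mem_setOf_eq, hP, hre φ]
      rw [hsets]
      exact isClosed_eq hcont1 hcont2
    · -- ae congruence
      intro φ₁ φ₂ hae _ hPφ₁
      show ∫ ω in A ∩ t', φ₂ ω ∂μ = ∫ ω in A ∩ t', (μ[φ₂|m']) ω ∂μ
      calc ∫ ω in A ∩ t', φ₂ ω ∂μ
          = ∫ ω in A ∩ t', φ₁ ω ∂μ := integral_congr_ae (ae_restrict_of_ae hae.symm)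
        _ = ∫ ω in A ∩ t', (μ[φ₁|m']) ω ∂μ := hPφ₁
        _ = ∫ ω in A ∩ t', (μ[φ₂|m']) ω ∂μ := by
            refine integral_congr_ae (ae_restrict_of_ae ?_)
            exact condExp_congr_ae hae
  exact hmain

/-- Dynamic (sequential) identification: under no interference, `Y⁽ᵈ⁾ ⊥ D | X`,
`Y⁽ᵈ⁾ ⊥ S | (D, X, M)`, and overlap, with `γ₀` a version of
`(x,m) ↦ E[Y | S=1, D=d, X=x, M=m]` and `ω₀` a version of
`x ↦ ∫ γ₀(1,d,x,m) dP(m | D=d, X=x)` (i.e. of `E[γ₀(1,d,X,M) | D=d, X]`), one has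
`E[Y⁽ᵈ⁾ | X] = ω₀(X)` a.e., and hence `E[Y⁽ᵈ⁾] = E[ω₀(X)]`. -/
theorem stmt_7 {Ω 𝒟 𝒳 ℳ : Type*} [MeasurableSpace Ω] [StandardBorelSpace Ω] [Nonempty Ω]
    [MeasurableSpace 𝒟] [m𝒳 : MeasurableSpace 𝒳] [MeasurableSpace ℳ]
    [MeasurableSingletonClass 𝒟]
    (μ : Measure Ω) [IsProbabilityMeasure μ]
    (Y Yd : Ω → ℝ) (S : Ω → Bool) (D : Ω → 𝒟) (X : Ω → 𝒳) (M : Ω → ℳ)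
    (hY : Measurable Y) (hYd : Measurable Yd) (hS : Measurable S) (hD : Measurable D)
    (hX : Measurable X) (hM : Measurable M) (d : 𝒟)
    (hYdInt : Integrable Yd μ)
    -- conditional exchangeability: `Y⁽ᵈ⁾ ⊥ D | X`
    (hCI1 : CondIndepFun (MeasurableSpace.comap X m𝒳)
      (MeasurableSpace.comap_le_iff_le_map.mpr hX.le_map) Yd D μ)
    -- conditional exchangeability: `Y⁽ᵈ⁾ ⊥ S | (D, X, M)`
    (hCI2 : CondIndepFun
      (MeasurableSpace.comap (fun ω => (D ω, X ω, M ω)) inferInstance)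
      (MeasurableSpace.comap_le_iff_le_map.mpr (hD.prodMk (hX.prodMk hM)).le_map) Yd S μ)
    -- no interference
    (hni : ∀ ω, D ω = d → Y ω = Yd ω)
    -- overlap: `P(D = d | X) > 0` and `P(S = 1 | D, X, M) > 0` almost surely
    (hov1 : ∀ᵐ ω ∂μ,
      0 < (μ[Set.indicator {ω' | D ω' = d} (fun _ => (1 : ℝ)) |
        MeasurableSpace.comap X m𝒳]) ω)
    (hov2 : ∀ᵐ ω ∂μ,
      0 < (μ[Set.indicator {ω' | S ω' = true} (fun _ => (1 : ℝ)) |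
        MeasurableSpace.comap (fun ω' => (D ω', X ω', M ω')) inferInstance]) ω)
    -- `γ₀` is a version of `(x,m) ↦ E[Y | S = 1, D = d, X = x, M = m]`
    (γ₀ : 𝒳 × ℳ → ℝ) (hγ₀ : Measurable γ₀)
    (hγ₀Int : Integrable (fun ω => γ₀ (X ω, M ω)) μ)
    (hγver : ∀ B : Set (𝒳 × ℳ), MeasurableSet B →
      ∫ ω in {ω | S ω = true ∧ D ω = d} ∩ (fun ω => (X ω, M ω)) ⁻¹' B, Y ω ∂μ
        = ∫ ω in {ω | S ω = true ∧ D ω = d} ∩ (fun ω => (X ω, M ω)) ⁻¹' B,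
            γ₀ (X ω, M ω) ∂μ)
    -- `ω₀` is a version of `x ↦ ∫ γ₀(1,d,x,m) dP(m | D = d, X = x)`
    (ω₀ : 𝒳 → ℝ) (hω₀ : Measurable ω₀)
    (hω₀Int : Integrable (fun ω => ω₀ (X ω)) μ)
    (hωver : ∀ B : Set 𝒳, MeasurableSet B →
      ∫ ω in {ω | D ω = d} ∩ X ⁻¹' B, γ₀ (X ω, M ω) ∂μ
        = ∫ ω in {ω | D ω = d} ∩ X ⁻¹' B, ω₀ (X ω) ∂μ) :
    (fun ω => ω₀ (X ω)) =ᵐ[μ] μ[Yd | MeasurableSpace.comap X m𝒳]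
      ∧ ∫ ω, Yd ω ∂μ = ∫ ω, ω₀ (X ω) ∂μ := by
  
  classical
  set Z : Ω → 𝒟 × 𝒳 × ℳ := fun ω => (D ω, X ω, M ω) with hZdef
  have hmXle : MeasurableSpace.comap X m𝒳 ≤ _ :=
    MeasurableSpace.comap_le_iff_le_map.mpr hX.le_map
  have hmZle : MeasurableSpace.comap Z inferInstance ≤ _ :=
    MeasurableSpace.comap_le_iff_le_map.mpr (hD.prodMk (hX.prodMk hM)).le_map
  haveI hsfX : SigmaFinite (μ.trim hmXle) := by infer_instance
  haveI hsfZ : SigmaFinite (μ.trim hmZle) := by infer_instance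
  have hZmeas : Measurable Z := hD.prodMk (hX.prodMk hM)
  set eD : Ω → ℝ :=
    μ[Set.indicator {ω' | D ω' = d} (fun _ => (1 : ℝ))|MeasurableSpace.comap X m𝒳] with heDdef
  set pS : Ω → ℝ :=
    μ[Set.indicator {ω' | S ω' = true} (fun _ => (1 : ℝ))|
      MeasurableSpace.comap Z inferInstance] with hpSdef
  set indD : Ω → ℝ := Set.indicator {ω' | D ω' = d} (fun _ => (1 : ℝ)) with hindDdef
  set h : Ω → ℝ := μ[Yd|MeasurableSpace.comap Z inferInstance] with hhdef
  set g' : Ω → ℝ := μ[Yd|MeasurableSpace.comap X m𝒳] with hg'def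
  set γf : Ω → ℝ := fun ω => γ₀ (X ω, M ω) with hγfdef
  set wf : Ω → ℝ := fun ω => ω₀ (X ω) with hwfdef
  -- basic measurability facts
  have hDset : MeasurableSet {ω' | D ω' = d} := hD (measurableSet_singleton d)
  have hSset : MeasurableSet {ω' | S ω' = true} := hS (measurableSet_singleton true)
  have hDmZ : MeasurableSet[MeasurableSpace.comap Z inferInstance] {ω' | D ω' = d} := by
    refine ⟨{d} ×ˢ (Set.univ : Set (𝒳 × ℳ)), (measurableSet_singleton d).prod .univ, ?_⟩
    ext ω
    simp only [Set.mem_preimage, Set.mem_prod, Set.mem_univ, and_true,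
      Set.mem_singleton_iff, Set.mem_setOf_eq, hZdef]
  have hZm : Measurable[MeasurableSpace.comap Z inferInstance] Z := Measurable.of_comap_le le_rfl
  have hγfmZ : Measurable[MeasurableSpace.comap Z inferInstance] γf :=
    hγ₀.comp (measurable_snd.comp hZm)
  have hwfmX : Measurable[MeasurableSpace.comap X m𝒳] wf :=
    hω₀.comp (Measurable.of_comap_le le_rfl)
  have hγfmeas : Measurable γf := hγ₀.comp (hX.prodMk hM)
  -- boundedness of conditional probabilities
  have hbound : ∀ (m' : MeasurableSpace Ω) (hm' : m' ≤ _), SigmaFinite (μ.trim hm') →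
      ∀ t' : Set Ω,
      ∀ᵐ ω ∂μ, ‖(μ[t'.indicator (fun _ => (1 : ℝ))|m']) ω‖ ≤ 1 := by
    intro m' hm' hsf t'
    have h0 : (0 : Ω → ℝ) ≤ᵐ[μ] μ[t'.indicator (fun _ => (1 : ℝ))|m'] :=
      condExp_nonneg (Filter.Eventually.of_forall fun ω =>
        Set.indicator_nonneg (fun _ _ => zero_le_one) ω)
    have h1 : μ[t'.indicator (fun _ => (1 : ℝ))|m'] ≤ᵐ[μ] μ[(fun _ => (1 : ℝ))|m'] := by
      by_cases hint : Integrable (t'.indicator (fun _ => (1 : ℝ))) μ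
      · refine condExp_mono hint (integrable_const _)
          (Filter.Eventually.of_forall fun ω => ?_)
        by_cases hω : ω ∈ t' <;> simp [hω]
      · rw [condExp_of_not_integrable hint]
        refine (condExp_nonneg (μ := μ) (m := m')
          (f := fun _ => (1 : ℝ)) (Filter.Eventually.of_forall fun ω => zero_le_one)).mono ?_
        intro ω hω; exact hω
    rw [condExp_const hm'] at h1
    filter_upwards [h0, h1] with ω h0ω h1ω
    simp only [Pi.zero_apply] at h0ω
    rw [Real.norm_eq_abs, abs_le]
    exact ⟨by linarith, h1ω⟩
  have hpS01 : ∀ᵐ ω ∂μ, ‖pS ω‖ ≤ 1 := hbound _ hmZle hsfZ _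
  have heD01 : ∀ᵐ ω ∂μ, ‖eD ω‖ ≤ 1 := hbound _ hmXle hsfX _
  have hindD01 : ∀ ω, ‖indD ω‖ ≤ 1 := by
    intro ω; by_cases hω : ω ∈ {ω' | D ω' = d} <;> simp [hindDdef, hω]
  have hindDm : StronglyMeasurable[MeasurableSpace.comap Z inferInstance] indD :=
    stronglyMeasurable_const.indicator hDmZ
  -- integrability facts
  have hInt_hpS : Integrable (fun ω => h ω * pS ω) μ := by
    have := (integrable_condExp (μ := μ) (f := Yd)
      (m := MeasurableSpace.comap Z inferInstance)).bdd_mul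
      ((stronglyMeasurable_condExp.mono hmZle).aestronglyMeasurable) hpS01
    exact this.congr (Filter.Eventually.of_forall fun ω => by ring)
  have hInt_hpSind : Integrable (fun ω => h ω * pS ω * indD ω) μ := by
    have := hInt_hpS.bdd_mul ((hindDm.mono hmZle).aestronglyMeasurable)
      (Filter.Eventually.of_forall hindD01)
    exact this.congr (Filter.Eventually.of_forall fun ω => by ring)
  have hInt_γpS : Integrable (fun ω => γf ω * pS ω) μ := by
    have := hγ₀Int.bdd_mul ((stronglyMeasurable_condExp.mono hmZle).aestronglyMeasurable) hpS01
    exact this.congr (Filter.Eventually.of_forall fun ω => by ring)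
  have hInt_γpSind : Integrable (fun ω => γf ω * pS ω * indD ω) μ := by
    have := hInt_γpS.bdd_mul ((hindDm.mono hmZle).aestronglyMeasurable)
      (Filter.Eventually.of_forall hindD01)
    exact this.congr (Filter.Eventually.of_forall fun ω => by ring)
  -- inner chain: for measurable B ⊆ 𝒳 × ℳ
  have claim1 : ∀ B : Set (𝒳 × ℳ), MeasurableSet B →
      ∫ ω in {ω' | D ω' = d} ∩ (fun ω => (X ω, M ω)) ⁻¹' B, h ω * pS ω ∂μ
        = ∫ ω in {ω' | D ω' = d} ∩ (fun ω => (X ω, M ω)) ⁻¹' B, γf ω * pS ω ∂μ := by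
    intro B hB
    set C : Set Ω := {ω' | D ω' = d} ∩ (fun ω => (X ω, M ω)) ⁻¹' B with hCdef
    have hCmZ : MeasurableSet[MeasurableSpace.comap Z inferInstance] C := by
      refine ⟨{d} ×ˢ B, (measurableSet_singleton d).prod hB, ?_⟩
      ext ω
      simp only [Set.mem_preimage, Set.mem_prod, Set.mem_singleton_iff, hCdef, hZdef,
        Set.mem_inter_iff, Set.mem_setOf_eq]
    have hCm0 : MeasurableSet C := hDset.inter ((hX.prodMk hM) hB)
    have hsetEq : C ∩ {ω' | S ω' = true}
        = {ω | S ω = true ∧ D ω = d} ∩ (fun ω => (X ω, M ω)) ⁻¹' B := by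
      ext ω
      simp only [hCdef, Set.mem_inter_iff, Set.mem_setOf_eq, Set.mem_preimage]
      tauto
    calc ∫ ω in C, h ω * pS ω ∂μ
        = ∫ ω in C ∩ {ω' | S ω' = true}, h ω ∂μ :=
          (pullout_aux hmZle μ stronglyMeasurable_condExp integrable_condExp hSset hCmZ).symm
      _ = ∫ ω in C ∩ {ω' | S ω' = true}, Yd ω ∂μ :=
          (condIndep_setIntegral_eq hmZle μ hYd hS hCI2 hYdInt
            (measurableSet_singleton true) hCmZ).symm
      _ = ∫ ω in C ∩ {ω' | S ω' = true}, Y ω ∂μ := by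
          refine setIntegral_congr_fun (hCm0.inter hSset) fun ω hω => ?_
          exact (hni ω hω.1.1).symm
      _ = ∫ ω in {ω | S ω = true ∧ D ω = d} ∩ (fun ω => (X ω, M ω)) ⁻¹' B, Y ω ∂μ := by
          rw [hsetEq]
      _ = ∫ ω in {ω | S ω = true ∧ D ω = d} ∩ (fun ω => (X ω, M ω)) ⁻¹' B, γf ω ∂μ :=
          hγver B hB
      _ = ∫ ω in C ∩ {ω' | S ω' = true}, γf ω ∂μ := by rw [hsetEq]
      _ = ∫ ω in C, γf ω * pS ω ∂μ :=
          pullout_aux hmZle μ hγfmZ.stronglyMeasurable hγ₀Int hSset hCmZ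
  -- extension to all mZ-sets
  have claim2 : ∀ U : Set Ω, MeasurableSet[MeasurableSpace.comap Z inferInstance] U →
      ∫ ω in U, h ω * pS ω * indD ω ∂μ = ∫ ω in U, γf ω * pS ω * indD ω ∂μ := by
    rintro U ⟨V, hV, rfl⟩
    have hι : Measurable (fun xm : 𝒳 × ℳ => ((d, xm.1, xm.2) : 𝒟 × 𝒳 × ℳ)) :=
      measurable_const.prodMk (measurable_fst.prodMk measurable_snd)
    set BV : Set (𝒳 × ℳ) := (fun xm : 𝒳 × ℳ => ((d, xm.1, xm.2) : 𝒟 × 𝒳 × ℳ)) ⁻¹' V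
      with hBVdef
    have hBV : MeasurableSet BV := hι hV
    have hseteq : Z ⁻¹' V ∩ {ω' | D ω' = d}
        = {ω' | D ω' = d} ∩ (fun ω => (X ω, M ω)) ⁻¹' BV := by
      ext ω
      simp only [Set.mem_inter_iff, Set.mem_preimage, Set.mem_setOf_eq, hBVdef, hZdef]
      constructor
      · rintro ⟨hv, hd⟩
        refine ⟨hd, ?_⟩
        rwa [hd] at hv
      · rintro ⟨hd, hv⟩
        refine ⟨?_, hd⟩
        rwa [hd]
    have hindmul : ∀ q : Ω → ℝ, (fun ω => q ω * indD ω)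
        = fun ω => Set.indicator {ω' | D ω' = d} q ω := by
      intro q
      funext ω
      by_cases hω : ω ∈ {ω' | D ω' = d} <;> simp [hindDdef, hω]
    have key : ∀ q : Ω → ℝ, ∫ ω in Z ⁻¹' V, q ω * indD ω ∂μ
        = ∫ ω in {ω' | D ω' = d} ∩ (fun ω => (X ω, M ω)) ⁻¹' BV, q ω ∂μ := by
      intro q
      rw [show (fun ω => q ω * indD ω) = fun ω => Set.indicator {ω' | D ω' = d} q ω
        from hindmul q]
      rw [setIntegral_indicator hDset, hseteq]
    calc ∫ ω in Z ⁻¹' V, h ω * pS ω * indD ω ∂μ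
        = ∫ ω in {ω' | D ω' = d} ∩ (fun ω => (X ω, M ω)) ⁻¹' BV, h ω * pS ω ∂μ :=
          key (fun ω => h ω * pS ω)
      _ = ∫ ω in {ω' | D ω' = d} ∩ (fun ω => (X ω, M ω)) ⁻¹' BV, γf ω * pS ω ∂μ :=
          claim1 BV hBV
      _ = ∫ ω in Z ⁻¹' V, γf ω * pS ω * indD ω ∂μ := (key (fun ω => γf ω * pS ω)).symm
  -- a.e. equality on {D = d}
  have claim3 : (fun ω => h ω * pS ω * indD ω) =ᵐ[μ] fun ω => γf ω * pS ω * indD ω := by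
    refine ae_eq_of_forall_setIntegral_eq_of_sigmaFinite' hmZle
      (fun s _ _ => hInt_hpSind.integrableOn)
      (fun s _ _ => hInt_γpSind.integrableOn)
      (fun s hs _ => claim2 s hs) ?_ ?_
    · exact ((stronglyMeasurable_condExp.mul stronglyMeasurable_condExp).mul
        hindDm).aestronglyMeasurable
    · exact ((hγfmZ.stronglyMeasurable.mul stronglyMeasurable_condExp).mul
        hindDm).aestronglyMeasurable
  have claim4 : (fun ω => h ω * indD ω) =ᵐ[μ] fun ω => γf ω * indD ω := by
    filter_upwards [claim3, hov2] with ω h3 h2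
    have h2' : pS ω ≠ 0 := ne_of_gt h2
    have : h ω * indD ω * pS ω = γf ω * indD ω * pS ω := by linear_combination h3
    exact mul_right_cancel₀ h2' this
  -- outer chain: for measurable B ⊆ 𝒳
  have claim5 : ∀ B : Set 𝒳, MeasurableSet B →
      ∫ ω in X ⁻¹' B, g' ω * eD ω ∂μ = ∫ ω in X ⁻¹' B, wf ω * eD ω ∂μ := by
    intro B hB
    have hAmX : MeasurableSet[MeasurableSpace.comap X m𝒳] (X ⁻¹' B) := ⟨B, hB, rfl⟩
    have hADm0 : MeasurableSet (X ⁻¹' B ∩ {ω' | D ω' = d}) := (hX hB).inter hDset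
    have hADmZ : MeasurableSet[MeasurableSpace.comap Z inferInstance]
        (X ⁻¹' B ∩ {ω' | D ω' = d}) := by
      refine ⟨{d} ×ˢ (B ×ˢ (Set.univ : Set ℳ)),
        (measurableSet_singleton d).prod (hB.prod .univ), ?_⟩
      ext ω
      simp only [Set.mem_preimage, Set.mem_prod, Set.mem_univ, and_true,
        Set.mem_singleton_iff, Set.mem_inter_iff, Set.mem_setOf_eq, hZdef]
      tauto
    have b1 : ∫ ω in X ⁻¹' B ∩ {ω' | D ω' = d}, Yd ω ∂μ
        = ∫ ω in X ⁻¹' B ∩ {ω' | D ω' = d}, g' ω ∂μ :=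
      condIndep_setIntegral_eq hmXle μ hYd hD hCI1 hYdInt (measurableSet_singleton d) hAmX
    have b2 : ∫ ω in X ⁻¹' B ∩ {ω' | D ω' = d}, g' ω ∂μ = ∫ ω in X ⁻¹' B, g' ω * eD ω ∂μ :=
      pullout_aux hmXle μ stronglyMeasurable_condExp integrable_condExp hDset hAmX
    have b3 : ∫ ω in X ⁻¹' B ∩ {ω' | D ω' = d}, Yd ω ∂μ
        = ∫ ω in X ⁻¹' B ∩ {ω' | D ω' = d}, h ω ∂μ :=
      (setIntegral_condExp hmZle hYdInt hADmZ).symm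
    have b4 : ∫ ω in X ⁻¹' B ∩ {ω' | D ω' = d}, h ω ∂μ
        = ∫ ω in X ⁻¹' B ∩ {ω' | D ω' = d}, γf ω ∂μ := by
      calc ∫ ω in X ⁻¹' B ∩ {ω' | D ω' = d}, h ω ∂μ
          = ∫ ω in X ⁻¹' B ∩ {ω' | D ω' = d}, h ω * indD ω ∂μ := by
            refine setIntegral_congr_fun hADm0 fun ω hω => ?_
            simp [hindDdef, Set.indicator_of_mem hω.2]
        _ = ∫ ω in X ⁻¹' B ∩ {ω' | D ω' = d}, γf ω * indD ω ∂μ :=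
            integral_congr_ae (ae_restrict_of_ae claim4)
        _ = ∫ ω in X ⁻¹' B ∩ {ω' | D ω' = d}, γf ω ∂μ := by
            refine setIntegral_congr_fun hADm0 fun ω hω => ?_
            simp [hindDdef, Set.indicator_of_mem hω.2]
    have b5 : ∫ ω in X ⁻¹' B ∩ {ω' | D ω' = d}, γf ω ∂μ
        = ∫ ω in X ⁻¹' B ∩ {ω' | D ω' = d}, wf ω ∂μ := by
      rw [Set.inter_comm]
      exact hωver B hB
    have b6 : ∫ ω in X ⁻¹' B ∩ {ω' | D ω' = d}, wf ω ∂μ = ∫ ω in X ⁻¹' B, wf ω * eD ω ∂μ :=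
      pullout_aux hmXle μ hwfmX.stronglyMeasurable hω₀Int hDset hAmX
    rw [← b2, ← b1, b3, b4, b5, b6]
  -- integrability for the outer uniqueness argument
  have hInt_g'eD : Integrable (fun ω => g' ω * eD ω) μ := by
    have := (integrable_condExp (μ := μ) (f := Yd)
      (m := MeasurableSpace.comap X m𝒳)).bdd_mul
      ((stronglyMeasurable_condExp.mono hmXle).aestronglyMeasurable) heD01
    exact this.congr (Filter.Eventually.of_forall fun ω => by ring)
  have hInt_wfeD : Integrable (fun ω => wf ω * eD ω) μ := by
    have := hω₀Int.bdd_mul ((stronglyMeasurable_condExp.mono hmXle).aestronglyMeasurable) heD01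
    exact this.congr (Filter.Eventually.of_forall fun ω => by ring)
  have claim6 : (fun ω => g' ω * eD ω) =ᵐ[μ] fun ω => wf ω * eD ω := by
    refine ae_eq_of_forall_setIntegral_eq_of_sigmaFinite' hmXle
      (fun s _ _ => hInt_g'eD.integrableOn)
      (fun s _ _ => hInt_wfeD.integrableOn)
      ?_ ?_ ?_
    · rintro s ⟨B, hB, rfl⟩ -
      exact claim5 B hB
    · exact (stronglyMeasurable_condExp.mul stronglyMeasurable_condExp).aestronglyMeasurable
    · exact (hwfmX.stronglyMeasurable.mul stronglyMeasurable_condExp).aestronglyMeasurable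
  have claim7 : g' =ᵐ[μ] wf := by
    filter_upwards [claim6, hov1] with ω h6 h1
    exact mul_right_cancel₀ (ne_of_gt h1) h6
  refine ⟨claim7.symm, ?_⟩
  calc ∫ ω, Yd ω ∂μ = ∫ ω, g' ω ∂μ := (integral_condExp hmXle).symm
    _ = ∫ ω, wf ω ∂μ := integral_congr_ae claim7
end

section
/- Riesz representer identity for the ATT numerator: let S ∈ {0,1}, D discrete with values d, d′, X covariates, and suppose P(S=1|D=d′,X) ≥ ε and P(D=d′|X) ≥ ε almost surely. Then for any bounded measurable γ, E[ γ(1,d′,X) · 1{D=d} ] = E[ (S · 1{D=d′} · P(D=d|X)) / (P(S=1|D=d′,X) · P(D=d′|X)) · γ(S,D,X) ]. -/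
open MeasureTheory

/-- If `f` takes values in `[0,1]` and `g ∘ X` has the same set-integrals as `f` over
preimages of measurable sets, then `g ∘ X ∈ [0,1]` a.e. -/
lemma aux_bound_01 {Ω 𝒳 : Type*} [MeasurableSpace Ω] [MeasurableSpace 𝒳]
    (μ : Measure Ω) [IsFiniteMeasure μ] (X : Ω → 𝒳) (hX : Measurable X)
    (f : Ω → ℝ) (hf0 : ∀ ω, 0 ≤ f ω) (hf1 : ∀ ω, f ω ≤ 1)
    (hfm : Measurable f) (g : 𝒳 → ℝ) (hg : Measurable g)
    (hver : ∀ B : Set 𝒳, MeasurableSet B →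
      ∫ ω in X ⁻¹' B, f ω ∂μ = ∫ ω in X ⁻¹' B, g (X ω) ∂μ) :
    ∀ᵐ ω ∂μ, 0 ≤ g (X ω) ∧ g (X ω) ≤ 1 := by
  have claim1 : ∀ n : ℕ, μ (X ⁻¹' {x | 1 < g x ∧ g x ≤ (n : ℝ)}) = 0 := by
    intro n
    set A : Set 𝒳 := {x | 1 < g x ∧ g x ≤ (n : ℝ)} with hA_def
    have hA : MeasurableSet A :=
      (measurableSet_lt measurable_const hg).inter (measurableSet_le hg measurable_const)
    set s : Set Ω := X ⁻¹' A with hs_def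
    have hs : MeasurableSet s := hX hA
    have hgbound : ∀ ω ∈ s, ‖g (X ω)‖ ≤ (n : ℝ) := by
      intro ω hω
      have h1 : 1 < g (X ω) := hω.1
      have h2 : g (X ω) ≤ (n : ℝ) := hω.2
      rw [Real.norm_eq_abs, abs_le]
      constructor
      · linarith [Nat.cast_nonneg (α := ℝ) n]
      · exact h2
    have hgint : IntegrableOn (fun ω => g (X ω)) s μ := by
      refine Integrable.mono' (integrable_const (n : ℝ)) ((hg.comp hX).aestronglyMeasurable.restrict) ?_
      exact (ae_restrict_iff' hs).mpr (Filter.Eventually.of_forall hgbound)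
    have hfint : IntegrableOn f s μ := by
      refine Integrable.mono' (integrable_const (1 : ℝ)) (hfm.aestronglyMeasurable.restrict) ?_
      refine Filter.Eventually.of_forall fun ω => ?_
      rw [Real.norm_eq_abs, abs_le]; exact ⟨by linarith [hf0 ω], hf1 ω⟩
    have h1int : IntegrableOn (fun _ : Ω => (1 : ℝ)) s μ := integrableOn_const (measure_lt_top _ _).ne
    have heq : ∫ ω in s, f ω ∂μ = ∫ ω in s, g (X ω) ∂μ := hver A hA
    have hle1 : ∫ ω in s, f ω ∂μ ≤ ∫ ω in s, (1 : ℝ) ∂μ :=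
      setIntegral_mono_on hfint h1int hs fun ω _ => hf1 ω
    have hge1 : ∫ ω in s, (1 : ℝ) ∂μ ≤ ∫ ω in s, g (X ω) ∂μ :=
      setIntegral_mono_on h1int hgint hs fun ω hω => le_of_lt hω.1
    -- so ∫ (g∘X - 1) over s is 0 and the integrand is > 0 on s
    have hzero : ∫ ω in s, (g (X ω) - 1) ∂μ = 0 := by
      rw [integral_sub hgint h1int]
      have : ∫ ω in s, g (X ω) ∂μ = ∫ ω in s, (1 : ℝ) ∂μ := le_antisymm (heq ▸ hle1) hge1
      rw [this]; ring
    have hnn : 0 ≤ᵐ[μ.restrict s] fun ω => g (X ω) - 1 := by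
      refine (ae_restrict_iff' hs).mpr (Filter.Eventually.of_forall fun ω hω => ?_)
      have : (1 : ℝ) < g (X ω) := hω.1
      simp only [Pi.zero_apply]; linarith
    have hzero_ae : (fun ω => g (X ω) - 1) =ᵐ[μ.restrict s] 0 :=
      (integral_eq_zero_iff_of_nonneg_ae hnn (hgint.sub h1int)).mp hzero
    have hfalse : ∀ᵐ ω ∂μ.restrict s, False := by
      filter_upwards [hzero_ae, ae_restrict_mem hs] with ω h1 h2
      have : (1 : ℝ) < g (X ω) := h2.1
      simp only [Pi.zero_apply] at h1
      linarith
    have := ae_iff.mp hfalse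
    simpa [Measure.restrict_apply_univ] using this
  have claim2 : ∀ n : ℕ, μ (X ⁻¹' {x | g x < 0 ∧ -(n : ℝ) ≤ g x}) = 0 := by
    intro n
    set A : Set 𝒳 := {x | g x < 0 ∧ -(n : ℝ) ≤ g x} with hA_def
    have hA : MeasurableSet A :=
      (measurableSet_lt hg measurable_const).inter (measurableSet_le measurable_const hg)
    set s : Set Ω := X ⁻¹' A with hs_def
    have hs : MeasurableSet s := hX hA
    have hgbound : ∀ ω ∈ s, ‖g (X ω)‖ ≤ (n : ℝ) := by
      intro ω hω
      rw [Real.norm_eq_abs, abs_le]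
      exact ⟨hω.2, le_trans (le_of_lt hω.1) (Nat.cast_nonneg n)⟩
    have hgint : IntegrableOn (fun ω => g (X ω)) s μ := by
      refine Integrable.mono' (integrable_const (n : ℝ)) ((hg.comp hX).aestronglyMeasurable.restrict) ?_
      exact (ae_restrict_iff' hs).mpr (Filter.Eventually.of_forall hgbound)
    have heq : ∫ ω in s, f ω ∂μ = ∫ ω in s, g (X ω) ∂μ := hver A hA
    have hfge : 0 ≤ ∫ ω in s, f ω ∂μ := setIntegral_nonneg hs fun ω _ => hf0 ω
    have hnn : 0 ≤ᵐ[μ.restrict s] fun ω => -g (X ω) := by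
      refine (ae_restrict_iff' hs).mpr (Filter.Eventually.of_forall fun ω hω => ?_)
      have : g (X ω) < 0 := hω.1
      simp only [Pi.zero_apply]; linarith
    have hzero : ∫ ω in s, (-g (X ω)) ∂μ = 0 := by
      have h1 : ∫ ω in s, (-g (X ω)) ∂μ = -∫ ω in s, g (X ω) ∂μ := integral_neg _
      have h2 : 0 ≤ ∫ ω in s, g (X ω) ∂μ := heq ▸ hfge
      have h3 : 0 ≤ ∫ ω in s, (-g (X ω)) ∂μ := setIntegral_nonneg hs ?_
      · linarith
      · intro ω hω; have : g (X ω) < 0 := hω.1; linarith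
    have hzero_ae : (fun ω => -g (X ω)) =ᵐ[μ.restrict s] 0 :=
      (integral_eq_zero_iff_of_nonneg_ae hnn hgint.neg).mp hzero
    have hfalse : ∀ᵐ ω ∂μ.restrict s, False := by
      filter_upwards [hzero_ae, ae_restrict_mem hs] with ω h1 h2
      have : g (X ω) < 0 := h2.1
      simp only [Pi.zero_apply] at h1
      linarith
    have := ae_iff.mp hfalse
    simpa [Measure.restrict_apply_univ] using this
  rw [ae_iff]
  refine measure_mono_null (t := ⋃ n : ℕ,
      (X ⁻¹' {x | 1 < g x ∧ g x ≤ (n : ℝ)} ∪ X ⁻¹' {x | g x < 0 ∧ -(n : ℝ) ≤ g x})) ?_ ?_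
  · intro ω hω
    simp only [Set.mem_setOf_eq, not_and_or, not_le] at hω
    obtain ⟨n, hn⟩ := exists_nat_ge (|g (X ω)|)
    refine Set.mem_iUnion.mpr ⟨n, ?_⟩
    rcases hω with h | h
    · right
      refine ⟨h, ?_⟩
      linarith [neg_abs_le (g (X ω))]
    · left
      exact ⟨h, le_trans (le_abs_self _) hn⟩
  · exact measure_iUnion_null fun n => by
      rw [measure_union_null_iff]; exact ⟨claim1 n, claim2 n⟩

/-- Transfer lemma: if `g ∘ X` is a version of `E[f | σ(X)]`, then for measurable `h`,
`∫ h(X) f = ∫ h(X) g(X)`, given integrability. -/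
lemma aux_transfer {Ω 𝒳 : Type*} [mΩ : MeasurableSpace Ω] [MeasurableSpace 𝒳]
    (μ : Measure Ω) [IsFiniteMeasure μ] (X : Ω → 𝒳) (hX : Measurable X)
    (f : Ω → ℝ) (hf : Integrable f μ) (g h : 𝒳 → ℝ) (hg : Measurable g) (hh : Measurable h)
    (hgi : Integrable (fun ω => g (X ω)) μ)
    (hhf : Integrable (fun ω => h (X ω) * f ω) μ)
    (hver : ∀ B : Set 𝒳, MeasurableSet B →
      ∫ ω in X ⁻¹' B, f ω ∂μ = ∫ ω in X ⁻¹' B, g (X ω) ∂μ) :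
    ∫ ω, h (X ω) * f ω ∂μ = ∫ ω, h (X ω) * g (X ω) ∂μ := by
  set m : MeasurableSpace Ω := MeasurableSpace.comap X inferInstance with hm_def
  have hm : m ≤ mΩ := hX.comap_le
  have hXm : Measurable[m] X := Measurable.of_comap_le le_rfl
  haveI : IsFiniteMeasure (μ.trim hm) := isFiniteMeasure_trim hm
  haveI : SigmaFinite (μ.trim hm) := inferInstance
  have hcond : (fun ω => g (X ω)) =ᵐ[μ] μ[f|m] := by
    refine ae_eq_condExp_of_forall_setIntegral_eq hm hf ?_ ?_ ?_
    · intro s hs _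
      exact hgi.restrict
    · rintro s ⟨B, hB, rfl⟩ _
      exact (hver B hB).symm
    · exact StronglyMeasurable.aestronglyMeasurable
        ((hg.comp hXm).stronglyMeasurable)
  have hhm : StronglyMeasurable[m] (fun ω => h (X ω)) := (hh.comp hXm).stronglyMeasurable
  have hmul : μ[(fun ω => h (X ω)) * f|m] =ᵐ[μ] (fun ω => h (X ω)) * μ[f|m] :=
    condExp_mul_of_stronglyMeasurable_left hhm hhf hf
  calc ∫ ω, h (X ω) * f ω ∂μ
      = ∫ ω, ((fun ω => h (X ω)) * f) ω ∂μ := rfl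
    _ = ∫ ω, (μ[(fun ω => h (X ω)) * f|m]) ω ∂μ := (integral_condExp hm).symm
    _ = ∫ ω, ((fun ω => h (X ω)) * μ[f|m]) ω ∂μ := integral_congr_ae hmul
    _ = ∫ ω, h (X ω) * g (X ω) ∂μ := by
        refine integral_congr_ae ?_
        filter_upwards [hcond] with ω hω
        simp only [Pi.mul_apply]
        rw [hω]

/-- Riesz representer identity for the ATT numerator: with `πd, πd'` versions of
`P(D=d|X)`, `P(D=d'|X)` and `ρ` a version of `P(S=1|D=d',X)`, where
`ρ, πd' ≥ ε > 0`, for any bounded measurable `γ`,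
`E[γ(1,d',X) 1{D=d}] = E[ S·1{D=d'}·πd(X) / (ρ(X) πd'(X)) · γ(S,D,X) ]`. -/
theorem stmt_15 {Ω 𝒟 𝒳 : Type*} [MeasurableSpace Ω] [MeasurableSpace 𝒟] [MeasurableSpace 𝒳]
    [MeasurableSingletonClass 𝒟] [DecidableEq 𝒟]
    (μ : Measure Ω) [IsProbabilityMeasure μ]
    (S : Ω → Bool) (D : Ω → 𝒟) (X : Ω → 𝒳)
    (hS : Measurable S) (hD : Measurable D) (hX : Measurable X) (d d' : 𝒟)
    (γ : Bool × 𝒟 × 𝒳 → ℝ) (hγ : Measurable γ) (Cγ : ℝ) (hγb : ∀ p, |γ p| ≤ Cγ)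
    (πd πd' ρ : 𝒳 → ℝ) (hπd : Measurable πd) (hπd' : Measurable πd') (hρ : Measurable ρ)
    (ε : ℝ) (hε : 0 < ε) (hπε : ∀ x, ε ≤ πd' x) (hρε : ∀ x, ε ≤ ρ x)
    -- `πd` is a version of `P(D = d | X)`:
    (hπdver : ∀ B : Set 𝒳, MeasurableSet B →
      ∫ ω in X ⁻¹' B, (if D ω = d then (1 : ℝ) else 0) ∂μ
        = ∫ ω in X ⁻¹' B, πd (X ω) ∂μ)
    -- `πd'` is a version of `P(D = d' | X)`:
    (hπd'ver : ∀ B : Set 𝒳, MeasurableSet B →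
      ∫ ω in X ⁻¹' B, (if D ω = d' then (1 : ℝ) else 0) ∂μ
        = ∫ ω in X ⁻¹' B, πd' (X ω) ∂μ)
    -- `ρ` is a version of `P(S = 1 | D = d', X)`:
    (hρver : ∀ B : Set 𝒳, MeasurableSet B →
      ∫ ω in {ω | D ω = d'} ∩ X ⁻¹' B, (if S ω then (1 : ℝ) else 0) ∂μ
        = ∫ ω in {ω | D ω = d'} ∩ X ⁻¹' B, ρ (X ω) ∂μ) :
    ∫ ω, γ (true, d', X ω) * (if D ω = d then (1 : ℝ) else 0) ∂μ
      = ∫ ω, (if S ω then (1 : ℝ) else 0) * (if D ω = d' then (1 : ℝ) else 0) * πd (X ω)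
          / (ρ (X ω) * πd' (X ω)) * γ (S ω, D ω, X ω) ∂μ := by
  classical
  -- nonemptiness and Cγ ≥ 0
  have hΩne : Nonempty Ω := by
    rcases isEmpty_or_nonempty Ω with h | h
    · exfalso
      have h1 : μ Set.univ = 1 := measure_univ
      rw [Set.univ_eq_empty_iff.mpr h] at h1
      simp at h1
    · exact h
  obtain ⟨ω₀⟩ := hΩne
  have hCγ : 0 ≤ Cγ := le_trans (abs_nonneg _) (hγb (true, d', X ω₀))
  -- measurable sets and functions
  have hsetd : MeasurableSet {ω | D ω = d} := hD (measurableSet_singleton d)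
  have hsetd' : MeasurableSet {ω | D ω = d'} := hD (measurableSet_singleton d')
  have hsetS : MeasurableSet {ω | S ω = true} := hS (measurableSet_singleton true)
  have hinddm : Measurable (fun ω => if D ω = d then (1 : ℝ) else 0) :=
    Measurable.ite hsetd measurable_const measurable_const
  have hindd'm : Measurable (fun ω => if D ω = d' then (1 : ℝ) else 0) :=
    Measurable.ite hsetd' measurable_const measurable_const
  have hindSm : Measurable (fun ω => if S ω then (1 : ℝ) else 0) :=
    Measurable.ite hsetS measurable_const measurable_const
  have hγ1 : Measurable (fun x : 𝒳 => γ (true, d', x)) :=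
    hγ.comp (measurable_const.prodMk (measurable_const.prodMk measurable_id))
  have hh1m : Measurable (fun x : 𝒳 => πd x / (ρ x * πd' x) * γ (true, d', x)) :=
    (hπd.div (hρ.mul hπd')).mul hγ1
  have hh2m : Measurable (fun x : 𝒳 => πd x / πd' x * γ (true, d', x)) :=
    (hπd.div hπd').mul hγ1
  -- positivity facts
  have hρpos : ∀ x, 0 < ρ x := fun x => lt_of_lt_of_le hε (hρε x)
  have hπ'pos : ∀ x, 0 < πd' x := fun x => lt_of_lt_of_le hε (hπε x)
  -- restricted measure
  set μ' : Measure Ω := μ.restrict {ω | D ω = d'} with hμ'def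
  haveI : IsFiniteMeasure μ' := by rw [hμ'def]; infer_instance
  -- a.e. bounds for the conditional probability versions
  have hπd01 : ∀ᵐ ω ∂μ, 0 ≤ πd (X ω) ∧ πd (X ω) ≤ 1 := by
    refine aux_bound_01 μ X hX _ (fun ω => ?_) (fun ω => ?_) hinddm πd hπd hπdver
    · by_cases h : D ω = d <;> simp [h]
    · by_cases h : D ω = d <;> simp [h]
  have hπd'01 : ∀ᵐ ω ∂μ, 0 ≤ πd' (X ω) ∧ πd' (X ω) ≤ 1 := by
    refine aux_bound_01 μ X hX _ (fun ω => ?_) (fun ω => ?_) hindd'm πd' hπd' hπd'ver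
    · by_cases h : D ω = d' <;> simp [h]
    · by_cases h : D ω = d' <;> simp [h]
  have hρver' : ∀ B : Set 𝒳, MeasurableSet B →
      ∫ ω in X ⁻¹' B, (if S ω then (1 : ℝ) else 0) ∂μ' = ∫ ω in X ⁻¹' B, ρ (X ω) ∂μ' := by
    intro B hB
    rw [hμ'def, Measure.restrict_restrict (hX hB), Set.inter_comm]
    exact hρver B hB
  have hρ01 : ∀ᵐ ω ∂μ', 0 ≤ ρ (X ω) ∧ ρ (X ω) ≤ 1 := by
    refine aux_bound_01 μ' X hX _ (fun ω => ?_) (fun ω => ?_) hindSm ρ hρ hρver'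
    · by_cases h : S ω <;> simp [h]
    · by_cases h : S ω <;> simp [h]
  -- integrability helper
  have hmono : ∀ (ν : Measure Ω), IsFiniteMeasure ν → ∀ (u : Ω → ℝ),
      AEStronglyMeasurable u ν → ∀ C : ℝ, (∀ᵐ ω ∂ν, ‖u ω‖ ≤ C) → Integrable u ν := by
    intro ν hν u hu C hC
    haveI := hν
    exact Integrable.mono' (integrable_const C) hu hC
  -- pointwise bound on h1 given |πd| ≤ 1
  have hh1bd : ∀ x, |πd x| ≤ 1 → |πd x / (ρ x * πd' x) * γ (true, d', x)| ≤ 1 / (ε * ε) * Cγ := by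
    intro x hx
    rw [abs_mul, abs_div]
    have hden : ε * ε ≤ ρ x * πd' x :=
      mul_le_mul (hρε x) (hπε x) (le_of_lt hε) (le_of_lt (hρpos x))
    have habs : |ρ x * πd' x| = ρ x * πd' x :=
      abs_of_pos (mul_pos (hρpos x) (hπ'pos x))
    rw [habs]
    refine mul_le_mul ?_ (hγb _) (abs_nonneg _) (by positivity)
    exact div_le_div₀ zero_le_one hx (by positivity) hden
  have hh2bd : ∀ x, |πd x| ≤ 1 → |πd x / πd' x * γ (true, d', x)| ≤ 1 / ε * Cγ := by
    intro x hx
    rw [abs_mul, abs_div]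
    have habs : |πd' x| = πd' x := abs_of_pos (hπ'pos x)
    rw [habs]
    refine mul_le_mul ?_ (hγb _) (abs_nonneg _) (by positivity)
    exact div_le_div₀ zero_le_one hx hε (hπε x)
  -- Transfer D : ∫ γ1(X) 1{D=d} = ∫ γ1(X) πd(X)
  have eq3 : ∫ ω, γ (true, d', X ω) * (if D ω = d then (1 : ℝ) else 0) ∂μ
      = ∫ ω, γ (true, d', X ω) * πd (X ω) ∂μ := by
    refine aux_transfer μ X hX _ ?_ πd (fun x => γ (true, d', x)) hπd hγ1 ?_ ?_ hπdver
    · refine hmono μ inferInstance _ hinddm.aestronglyMeasurable 1 (Filter.Eventually.of_forall fun ω => ?_)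
      by_cases h : D ω = d <;> simp [h]
    · refine hmono μ inferInstance _ (hπd.comp hX).aestronglyMeasurable 1 ?_
      filter_upwards [hπd01] with ω hω
      rw [Real.norm_eq_abs, abs_le]; exact ⟨by linarith [hω.1], hω.2⟩
    · refine hmono μ inferInstance _ (hγ1.comp hX |>.mul hinddm).aestronglyMeasurable Cγ
        (Filter.Eventually.of_forall fun ω => ?_)
      rw [Real.norm_eq_abs, abs_mul]
      by_cases h : D ω = d <;> simp [h, abs_of_nonneg, hγb, hCγ]
  -- Transfer C : ∫ h2(X) 1{D=d'} = ∫ h2(X) πd'(X)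
  have eq2 : ∫ ω, (πd (X ω) / πd' (X ω) * γ (true, d', X ω)) * (if D ω = d' then (1 : ℝ) else 0) ∂μ
      = ∫ ω, (πd (X ω) / πd' (X ω) * γ (true, d', X ω)) * πd' (X ω) ∂μ := by
    refine aux_transfer μ X hX _ ?_ πd' (fun x => πd x / πd' x * γ (true, d', x)) hπd' hh2m ?_ ?_ hπd'ver
    · refine hmono μ inferInstance _ hindd'm.aestronglyMeasurable 1 (Filter.Eventually.of_forall fun ω => ?_)
      by_cases h : D ω = d' <;> simp [h]
    · refine hmono μ inferInstance _ (hπd'.comp hX).aestronglyMeasurable 1 ?_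
      filter_upwards [hπd'01] with ω hω
      rw [Real.norm_eq_abs, abs_le]; exact ⟨by linarith [hω.1], hω.2⟩
    · refine hmono μ inferInstance _ ((hh2m.comp hX).mul hindd'm).aestronglyMeasurable (1 / ε * Cγ) ?_
      filter_upwards [hπd01] with ω hω
      rw [Real.norm_eq_abs, abs_mul]
      have h1 : |πd (X ω)| ≤ 1 := abs_le.mpr ⟨by linarith [hω.1], hω.2⟩
      have h2 := hh2bd (X ω) h1
      have h3 : |(if D ω = d' then (1:ℝ) else 0)| ≤ 1 := by by_cases h : D ω = d' <;> simp [h]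
      calc |πd (X ω) / πd' (X ω) * γ (true, d', X ω)| * |(if D ω = d' then (1:ℝ) else 0)|
          ≤ (1 / ε * Cγ) * 1 := mul_le_mul h2 h3 (abs_nonneg _) (by positivity)
        _ = 1 / ε * Cγ := mul_one _
  -- Transfer B : ∫ h1(X) 1{S} dμ' = ∫ h1(X) ρ(X) dμ'
  have eq1 : ∫ ω, (πd (X ω) / (ρ (X ω) * πd' (X ω)) * γ (true, d', X ω)) * (if S ω then (1 : ℝ) else 0) ∂μ'
      = ∫ ω, (πd (X ω) / (ρ (X ω) * πd' (X ω)) * γ (true, d', X ω)) * ρ (X ω) ∂μ' := by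
    refine aux_transfer μ' X hX _ ?_ ρ (fun x => πd x / (ρ x * πd' x) * γ (true, d', x)) hρ hh1m ?_ ?_ hρver'
    · refine hmono μ' inferInstance _ hindSm.aestronglyMeasurable 1 (Filter.Eventually.of_forall fun ω => ?_)
      by_cases h : S ω <;> simp [h]
    · refine hmono μ' inferInstance _ (hρ.comp hX).aestronglyMeasurable 1 ?_
      filter_upwards [hρ01] with ω hω
      rw [Real.norm_eq_abs, abs_le]; exact ⟨by linarith [hω.1], hω.2⟩
    · refine hmono μ' inferInstance _ ((hh1m.comp hX).mul hindSm).aestronglyMeasurable (1 / (ε * ε) * Cγ) ?_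
      have hπd01' : ∀ᵐ ω ∂μ', 0 ≤ πd (X ω) ∧ πd (X ω) ≤ 1 := by
        rw [hμ'def]; exact ae_restrict_of_ae hπd01
      filter_upwards [hπd01'] with ω hω
      rw [Real.norm_eq_abs, abs_mul]
      have h1 : |πd (X ω)| ≤ 1 := abs_le.mpr ⟨by linarith [hω.1], hω.2⟩
      have h2 := hh1bd (X ω) h1
      have h3 : |(if S ω then (1:ℝ) else 0)| ≤ 1 := by by_cases h : S ω <;> simp [h]
      calc |πd (X ω) / (ρ (X ω) * πd' (X ω)) * γ (true, d', X ω)| * |(if S ω then (1:ℝ) else 0)|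
          ≤ (1 / (ε * ε) * Cγ) * 1 := mul_le_mul h2 h3 (abs_nonneg _) (by positivity)
        _ = 1 / (ε * ε) * Cγ := mul_one _
  -- indicator ↔ restrict conversion
  have hind_restrict : ∀ (ψ : Ω → ℝ),
      ∫ ω, (if D ω = d' then (1 : ℝ) else 0) * ψ ω ∂μ = ∫ ω, ψ ω ∂μ' := by
    intro ψ
    rw [hμ'def, ← integral_indicator hsetd']
    refine integral_congr_ae (Filter.Eventually.of_forall fun ω => ?_)
    by_cases h : D ω = d' <;> simp [Set.indicator, h]
  -- main calc
  calc ∫ ω, γ (true, d', X ω) * (if D ω = d then (1 : ℝ) else 0) ∂μ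
      = ∫ ω, γ (true, d', X ω) * πd (X ω) ∂μ := eq3
    _ = ∫ ω, (πd (X ω) / πd' (X ω) * γ (true, d', X ω)) * πd' (X ω) ∂μ := by
        refine integral_congr_ae (Filter.Eventually.of_forall fun ω => ?_)
        have h := ne_of_gt (hπ'pos (X ω))
        field_simp
    _ = ∫ ω, (πd (X ω) / πd' (X ω) * γ (true, d', X ω)) * (if D ω = d' then (1 : ℝ) else 0) ∂μ := eq2.symm
    _ = ∫ ω, (if D ω = d' then (1 : ℝ) else 0) *
          ((πd (X ω) / (ρ (X ω) * πd' (X ω)) * γ (true, d', X ω)) * ρ (X ω)) ∂μ := by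
        refine integral_congr_ae (Filter.Eventually.of_forall fun ω => ?_)
        have h1 := ne_of_gt (hρpos (X ω))
        have h2 := ne_of_gt (hπ'pos (X ω))
        field_simp
    _ = ∫ ω, (πd (X ω) / (ρ (X ω) * πd' (X ω)) * γ (true, d', X ω)) * ρ (X ω) ∂μ' :=
        hind_restrict _
    _ = ∫ ω, (πd (X ω) / (ρ (X ω) * πd' (X ω)) * γ (true, d', X ω)) * (if S ω then (1 : ℝ) else 0) ∂μ' :=
        eq1.symm
    _ = ∫ ω, (if D ω = d' then (1 : ℝ) else 0) *
          ((πd (X ω) / (ρ (X ω) * πd' (X ω)) * γ (true, d', X ω)) * (if S ω then (1 : ℝ) else 0)) ∂μ :=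
        (hind_restrict _).symm
    _ = ∫ ω, (if S ω then (1 : ℝ) else 0) * (if D ω = d' then (1 : ℝ) else 0) * πd (X ω)
          / (ρ (X ω) * πd' (X ω)) * γ (S ω, D ω, X ω) ∂μ := by
        refine integral_congr_ae (Filter.Eventually.of_forall fun ω => ?_)
        by_cases hd : D ω = d'
        · by_cases hs : S ω
          · simp only [hd, hs, if_true]
            ring
          · simp [hs]
        · simp [hd]
end

section
/- Multiply robust identity in γ for dynamic sample selection: let π₀(d;X) = P(D=d|X), ρ₀(1;d,X,M) = P(S=1|D=d,X,M), γ₀(1,d,X,M) = E[Y|S=1,D=d,X,M], and ω₀(1,d;X) = E[γ₀(1,d,X,M)|D=d,X], with π₀, ρ₀ ≥ ε > 0. Then for ANY bounded measurable γ(1,d,x,m), E[ ω₀(1,d;X) + (1{D=d} S)/(π₀(d;X) ρ₀(1;d,X,M)) · (SY − γ(1,d,X,M)) + (1{D=d})/(π₀(d;X)) · (γ(1,d,X,M) − ω₀(1,d;X)) ] = E[ω₀(1,d;X)]. That is, misspecifying γ leaves the moment unchanged. -/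
open MeasureTheory

section aux

variable {Ω E : Type*} [mΩ : MeasurableSpace Ω] [mE : MeasurableSpace E] {μ : Measure Ω}
  [IsFiniteMeasure μ]

lemma stmt19_int_of_bdd {f : Ω → ℝ} (hf : Measurable f) {C : ℝ} (hb : ∀ ω, |f ω| ≤ C) :
    Integrable f μ :=
  ⟨hf.aestronglyMeasurable, HasFiniteIntegral.of_bounded (C := C)
    (Filter.Eventually.of_forall fun ω => by simpa using hb ω)⟩

lemma stmt19_key {g : Ω → E} (hg : Measurable g) {f₁ f₂ : Ω → ℝ}
    (hf₁ : Integrable f₁ μ) (hf₂ : Integrable f₂ μ)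
    (h : ∀ B : Set E, MeasurableSet B → ∫ ω in g ⁻¹' B, f₁ ω ∂μ = ∫ ω in g ⁻¹' B, f₂ ω ∂μ)
    {φ : E → ℝ} (hφ : Measurable φ) {C : ℝ} (hφb : ∀ x, |φ x| ≤ C) :
    ∫ ω, φ (g ω) * f₁ ω ∂μ = ∫ ω, φ (g ω) * f₂ ω ∂μ := by
  have hm : MeasurableSpace.comap g mE ≤ mΩ := hg.comap_le
  have hgm : Measurable[MeasurableSpace.comap g mE] g := Measurable.of_comap_le le_rfl
  have hφgm : StronglyMeasurable[MeasurableSpace.comap g mE] (fun ω => φ (g ω)) :=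
    (hφ.comp hgm).stronglyMeasurable
  have hcond : (μ[f₁|MeasurableSpace.comap g mE]) =ᵐ[μ] μ[f₂|MeasurableSpace.comap g mE] := by
    refine ae_eq_condExp_of_forall_setIntegral_eq hm hf₂
      (fun s _ _ => integrable_condExp.integrableOn)
      (fun s hs _ => ?_)
      stronglyMeasurable_condExp.aestronglyMeasurable
    rw [setIntegral_condExp hm hf₁ hs]
    obtain ⟨B, hB, rfl⟩ := hs
    exact h B hB
  have bound : ∀ᵐ ω ∂μ, ‖φ (g ω)‖ ≤ C :=
    Filter.Eventually.of_forall fun ω => by simpa using hφb (g ω)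
  have e1 := condExp_stronglyMeasurable_mul_of_bound hm hφgm hf₁ C bound
  have e2 := condExp_stronglyMeasurable_mul_of_bound hm hφgm hf₂ C bound
  calc ∫ ω, φ (g ω) * f₁ ω ∂μ
      = ∫ ω, ((fun ω => φ (g ω)) * f₁) ω ∂μ := rfl
    _ = ∫ ω, (μ[(fun ω => φ (g ω)) * f₁|MeasurableSpace.comap g mE]) ω ∂μ :=
        (integral_condExp hm).symm
    _ = ∫ ω, (μ[(fun ω => φ (g ω)) * f₂|MeasurableSpace.comap g mE]) ω ∂μ := by
        refine integral_congr_ae (e1.trans (.trans ?_ e2.symm))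
        exact (Filter.EventuallyEq.refl _ _).mul hcond
    _ = ∫ ω, ((fun ω => φ (g ω)) * f₂) ω ∂μ := integral_condExp hm
    _ = ∫ ω, φ (g ω) * f₂ ω ∂μ := rfl

end aux

/-- Multiply robust identity in `γ` for dynamic sample selection: with `π₀` a version of
`P(D=d|X)`, `ρ₀` a version of `P(S=1|D=d,X,M)`, `γ₀` a version of `E[Y|S=1,D=d,X,M]`,
and `ω₀` a version of `E[γ₀(1,d,X,M)|D=d,X]`, all propensities `≥ ε > 0`, for ANY
bounded measurable `γ`,
`E[ ω₀(X) + 1{D=d}S/(π₀(X)ρ₀(X,M)) (SY − γ(X,M)) + 1{D=d}/π₀(X) (γ(X,M) − ω₀(X)) ]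
  = E[ω₀(X)]`. -/
theorem stmt_19 {Ω 𝒟 𝒳 ℳ : Type*} [MeasurableSpace Ω] [MeasurableSpace 𝒟]
    [MeasurableSpace 𝒳] [MeasurableSpace ℳ]
    [MeasurableSingletonClass 𝒟] [DecidableEq 𝒟]
    (μ : Measure Ω) [IsProbabilityMeasure μ]
    (Y : Ω → ℝ) (S : Ω → Bool) (D : Ω → 𝒟) (X : Ω → 𝒳) (M : Ω → ℳ)
    (hY : Measurable Y) (hS : Measurable S) (hD : Measurable D) (hX : Measurable X)
    (hM : Measurable M) (CY : ℝ) (hYb : ∀ ω, |Y ω| ≤ CY) (d : 𝒟)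
    (π₀ : 𝒳 → ℝ) (ρ₀ : 𝒳 × ℳ → ℝ) (γ₀ : 𝒳 × ℳ → ℝ) (ω₀ : 𝒳 → ℝ)
    (hπ₀ : Measurable π₀) (hρ₀ : Measurable ρ₀) (hγ₀ : Measurable γ₀) (hω₀ : Measurable ω₀)
    (ε : ℝ) (hε : 0 < ε) (hπε : ∀ x, ε ≤ π₀ x) (hρε : ∀ p, ε ≤ ρ₀ p)
    (Cγ₀ : ℝ) (hγ₀b : ∀ p, |γ₀ p| ≤ Cγ₀) (Cω₀ : ℝ) (hω₀b : ∀ x, |ω₀ x| ≤ Cω₀)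
    -- `π₀` is a version of `P(D = d | X)`:
    (hπver : ∀ B : Set 𝒳, MeasurableSet B →
      ∫ ω in X ⁻¹' B, (if D ω = d then (1 : ℝ) else 0) ∂μ
        = ∫ ω in X ⁻¹' B, π₀ (X ω) ∂μ)
    -- `ρ₀` is a version of `P(S = 1 | D = d, X, M)`:
    (hρver : ∀ B : Set (𝒳 × ℳ), MeasurableSet B →
      ∫ ω in {ω | D ω = d} ∩ (fun ω => (X ω, M ω)) ⁻¹' B, (if S ω then (1 : ℝ) else 0) ∂μ
        = ∫ ω in {ω | D ω = d} ∩ (fun ω => (X ω, M ω)) ⁻¹' B, ρ₀ (X ω, M ω) ∂μ)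
    -- `γ₀` is a version of `E[Y | S = 1, D = d, X, M]`:
    (hγver : ∀ B : Set (𝒳 × ℳ), MeasurableSet B →
      ∫ ω in {ω | S ω = true ∧ D ω = d} ∩ (fun ω => (X ω, M ω)) ⁻¹' B, Y ω ∂μ
        = ∫ ω in {ω | S ω = true ∧ D ω = d} ∩ (fun ω => (X ω, M ω)) ⁻¹' B,
            γ₀ (X ω, M ω) ∂μ)
    -- `ω₀` is a version of `E[γ₀(1,d,X,M) | D = d, X]`:
    (hωver : ∀ B : Set 𝒳, MeasurableSet B →
      ∫ ω in {ω | D ω = d} ∩ X ⁻¹' B, γ₀ (X ω, M ω) ∂μ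
        = ∫ ω in {ω | D ω = d} ∩ X ⁻¹' B, ω₀ (X ω) ∂μ)
    -- an arbitrary bounded measurable `γ(1, d, ·, ·)`:
    (γ : 𝒳 × ℳ → ℝ) (hγ : Measurable γ) (Cγ : ℝ) (hγb : ∀ p, |γ p| ≤ Cγ) :
    ∫ ω, (ω₀ (X ω)
        + ((if D ω = d then (1 : ℝ) else 0) * (if S ω then (1 : ℝ) else 0)
            / (π₀ (X ω) * ρ₀ (X ω, M ω)))
          * ((if S ω then Y ω else 0) - γ (X ω, M ω))
        + ((if D ω = d then (1 : ℝ) else 0) / π₀ (X ω))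
          * (γ (X ω, M ω) - ω₀ (X ω))) ∂μ
      = ∫ ω, ω₀ (X ω) ∂μ := by
  -- nonemptiness and nonnegative constants
  obtain ⟨ω0⟩ : Nonempty Ω := by
    by_contra h
    have h1 : μ Set.univ = 1 := measure_univ
    rw [Set.univ_eq_empty_iff.mpr (not_nonempty_iff.mp h), measure_empty] at h1
    exact zero_ne_one h1
  have hCY0 : 0 ≤ CY := (abs_nonneg _).trans (hYb ω0)
  have hCγ₀0 : 0 ≤ Cγ₀ := (abs_nonneg _).trans (hγ₀b (X ω0, M ω0))
  have hCγ0 : 0 ≤ Cγ := (abs_nonneg _).trans (hγb (X ω0, M ω0))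
  have hCω₀0 : 0 ≤ Cω₀ := (abs_nonneg _).trans (hω₀b (X ω0))
  have hgm : Measurable (fun ω => (X ω, M ω)) := hX.prodMk hM
  have hAdm : MeasurableSet {ω | D ω = d} := hD (measurableSet_singleton d)
  have hAm : MeasurableSet {ω | S ω = true ∧ D ω = d} :=
    (hS (measurableSet_singleton true)).inter (hD (measurableSet_singleton d))
  have hπpos : ∀ x, 0 < π₀ x := fun x => lt_of_lt_of_le hε (hπε x)
  have hρpos : ∀ p, 0 < ρ₀ p := fun p => lt_of_lt_of_le hε (hρε p)
  have hεε : 0 < ε * ε := mul_pos hε hε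
  have hπρ : ∀ p : 𝒳 × ℳ, ε * ε ≤ π₀ p.1 * ρ₀ p := fun p =>
    mul_le_mul (hπε _) (hρε _) hε.le (hπpos _).le
  have hπρpos : ∀ p : 𝒳 × ℳ, 0 < π₀ p.1 * ρ₀ p := fun p => mul_pos (hπpos _) (hρpos _)
  -- bounds on the multipliers
  have hφ1b : ∀ p : 𝒳 × ℳ, |(γ₀ p - γ p) / (π₀ p.1 * ρ₀ p)| ≤ (Cγ₀ + Cγ) / (ε * ε) := by
    intro p
    rw [abs_div, abs_of_pos (hπρpos p)]
    exact div_le_div₀ (by linarith) ((abs_sub _ _).trans (add_le_add (hγ₀b p) (hγb p))) hεε (hπρ p)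
  have hφ2b : ∀ p : 𝒳 × ℳ, |1 / (π₀ p.1 * ρ₀ p)| ≤ 1 / (ε * ε) := by
    intro p
    rw [abs_div, abs_of_pos (hπρpos p), abs_one]
    exact div_le_div₀ zero_le_one le_rfl hεε (hπρ p)
  have hφ3b : ∀ x, |1 / π₀ x| ≤ 1 / ε := by
    intro x
    rw [abs_div, abs_of_pos (hπpos x), abs_one]
    exact div_le_div₀ zero_le_one le_rfl hε (hπε x)
  -- indicator bound helper
  have habs_ind : ∀ (s : Set Ω) (f : Ω → ℝ) (C : ℝ), (∀ ω, |f ω| ≤ C) → ∀ ω, |s.indicator f ω| ≤ C := by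
    intro s f C h ω
    by_cases hω : ω ∈ s
    · rw [Set.indicator_of_mem hω]; exact h ω
    · rw [Set.indicator_of_notMem hω]
      simpa using (abs_nonneg (f ω)).trans (h ω)
  -- integrable pieces
  have i1 : Integrable ({ω | S ω = true ∧ D ω = d}.indicator Y) μ :=
    stmt19_int_of_bdd (hY.indicator hAm) (habs_ind _ _ _ hYb)
  have i2 : Integrable ({ω | S ω = true ∧ D ω = d}.indicator (fun ω => γ₀ (X ω, M ω))) μ :=
    stmt19_int_of_bdd ((hγ₀.comp hgm).indicator hAm) (habs_ind _ _ _ (fun ω => hγ₀b _))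
  have hISm : Measurable (fun ω => if S ω then (1:ℝ) else 0) :=
    Measurable.ite (hS (measurableSet_singleton true)) measurable_const measurable_const
  have hISb : ∀ ω, |if S ω then (1:ℝ) else 0| ≤ 1 := by
    intro ω; split <;> simp
  have i3 : Integrable ({ω | D ω = d}.indicator (fun ω => if S ω then (1:ℝ) else 0)) μ :=
    stmt19_int_of_bdd (hISm.indicator hAdm) (habs_ind _ _ _ hISb)
  have i5 : Integrable ({ω | D ω = d}.indicator (fun ω => γ₀ (X ω, M ω))) μ :=
    stmt19_int_of_bdd ((hγ₀.comp hgm).indicator hAdm) (habs_ind _ _ _ (fun ω => hγ₀b _))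
  have i6 : Integrable ({ω | D ω = d}.indicator (fun ω => ω₀ (X ω))) μ :=
    stmt19_int_of_bdd ((hω₀.comp hX).indicator hAdm) (habs_ind _ _ _ (fun ω => hω₀b _))
  -- the hard integrability: `1_{D=d} ρ₀(X,M)` is integrable
  have i4 : Integrable ({ω | D ω = d}.indicator (fun ω => ρ₀ (X ω, M ω))) μ := by
    have hme : Measurable ({ω | D ω = d}.indicator fun ω => ρ₀ (X ω, M ω)) :=
      (hρ₀.comp hgm).indicator hAdm
    refine ⟨hme.aestronglyMeasurable, ?_⟩
    have hBn : ∀ n : ℕ, MeasurableSet {p : 𝒳 × ℳ | ρ₀ p ≤ (n : ℝ)} :=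
      fun n => hρ₀ measurableSet_Iic
    set F : ℕ → Ω → ENNReal := fun n =>
      ({ω | D ω = d} ∩ (fun ω => (X ω, M ω)) ⁻¹' {p | ρ₀ p ≤ (n : ℝ)}).indicator
        (fun ω => ENNReal.ofReal (ρ₀ (X ω, M ω))) with hF_def
    have hsn : ∀ n : ℕ, MeasurableSet
        ({ω | D ω = d} ∩ (fun ω => (X ω, M ω)) ⁻¹' {p | ρ₀ p ≤ (n : ℝ)}) :=
      fun n => hAdm.inter (hgm (hBn n))
    have hFm : ∀ n, Measurable (F n) := fun n =>
      (ENNReal.measurable_ofReal.comp (hρ₀.comp hgm)).indicator (hsn n)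
    have hFmono : Monotone F := by
      intro n m hnm
      refine Set.indicator_le_indicator_of_subset
        (Set.inter_subset_inter_right _ (Set.preimage_mono ?_)) (fun _ => zero_le)
      intro p hp
      exact le_trans hp ((Nat.cast_le (α := ℝ)).mpr hnm)
    have hFbd : ∀ n, ∫⁻ ω, F n ω ∂μ ≤ 1 := by
      intro n
      simp only [hF_def]
      rw [lintegral_indicator (hsn n)]
      have hion : IntegrableOn (fun ω => ρ₀ (X ω, M ω))
          ({ω | D ω = d} ∩ (fun ω => (X ω, M ω)) ⁻¹' {p | ρ₀ p ≤ (n : ℝ)}) μ := by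
        refine ⟨(hρ₀.comp hgm).aestronglyMeasurable.restrict, ?_⟩
        refine HasFiniteIntegral.of_bounded (C := (n : ℝ)) ?_
        refine (ae_restrict_iff' (hsn n)).2 (Filter.Eventually.of_forall fun ω hω => ?_)
        rw [Real.norm_eq_abs, abs_of_pos (hρpos _)]
        exact hω.2
      rw [← ofReal_integral_eq_lintegral_ofReal hion
        ((ae_restrict_iff' (hsn n)).2 (Filter.Eventually.of_forall fun ω _ => (hρpos _).le))]
      rw [← hρver _ (hBn n)]
      have h1 : ∫ ω in {ω | D ω = d} ∩ (fun ω => (X ω, M ω)) ⁻¹' {p | ρ₀ p ≤ (n : ℝ)},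
          (if S ω then (1:ℝ) else 0) ∂μ ≤ (μ ({ω | D ω = d} ∩
            (fun ω => (X ω, M ω)) ⁻¹' {p | ρ₀ p ≤ (n : ℝ)})).toReal := by
        have := norm_setIntegral_le_of_norm_le_const (μ := μ)
          (f := fun ω => if S ω then (1:ℝ) else 0)
          (s := {ω | D ω = d} ∩ (fun ω => (X ω, M ω)) ⁻¹' {p | ρ₀ p ≤ (n : ℝ)}) (C := 1)
          (measure_lt_top μ _) (fun ω _ => by rw [Real.norm_eq_abs]; exact hISb ω)
        calc ∫ ω in _, (if S ω then (1:ℝ) else 0) ∂μ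
            ≤ ‖∫ ω in _, (if S ω then (1:ℝ) else 0) ∂μ‖ := le_abs_self _
          _ ≤ 1 * (μ _).toReal := this
          _ = (μ _).toReal := one_mul _
      calc ENNReal.ofReal (∫ ω in _, (if S ω then (1:ℝ) else 0) ∂μ)
          ≤ ENNReal.ofReal ((μ ({ω | D ω = d} ∩
              (fun ω => (X ω, M ω)) ⁻¹' {p | ρ₀ p ≤ (n : ℝ)})).toReal) :=
            ENNReal.ofReal_le_ofReal h1
        _ ≤ μ ({ω | D ω = d} ∩ (fun ω => (X ω, M ω)) ⁻¹' {p | ρ₀ p ≤ (n : ℝ)}) :=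
            ENNReal.ofReal_toReal_le
        _ ≤ μ Set.univ := measure_mono (Set.subset_univ _)
        _ = 1 := measure_univ
    have hsup : ∀ ω, (⨆ n, F n ω) =
        ({ω | D ω = d}.indicator (fun ω => ENNReal.ofReal (ρ₀ (X ω, M ω)))) ω := by
      intro ω
      apply le_antisymm
      · refine iSup_le fun n => ?_
        exact Set.indicator_le_indicator_of_subset Set.inter_subset_left (fun _ => zero_le) ω
      · by_cases hω : ω ∈ {ω | D ω = d}
        · obtain ⟨n, hn⟩ := exists_nat_ge (ρ₀ (X ω, M ω))
          rw [Set.indicator_of_mem hω]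
          have hFn : F n ω = ENNReal.ofReal (ρ₀ (X ω, M ω)) := by
            simp only [hF_def]
            exact Set.indicator_of_mem (Set.mem_inter hω hn) _
          exact hFn ▸ le_iSup (fun n => F n ω) n
        · rw [Set.indicator_of_notMem hω]
          exact zero_le
    show ∫⁻ ω, (‖({ω | D ω = d}.indicator (fun ω => ρ₀ (X ω, M ω))) ω‖₊ : ENNReal) ∂μ < ⊤
    have heq : ∀ ω, (‖({ω | D ω = d}.indicator (fun ω => ρ₀ (X ω, M ω))) ω‖₊ : ENNReal)
        = ⨆ n, F n ω := by
      intro ω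
      rw [hsup ω]
      by_cases hω : ω ∈ {ω | D ω = d}
      · rw [Set.indicator_of_mem hω, Set.indicator_of_mem hω]
        exact Real.enorm_eq_ofReal (hρpos _).le
      · rw [Set.indicator_of_notMem hω, Set.indicator_of_notMem hω]
        simp
    calc ∫⁻ ω, (‖({ω | D ω = d}.indicator (fun ω => ρ₀ (X ω, M ω))) ω‖₊ : ENNReal) ∂μ
        = ∫⁻ ω, ⨆ n, F n ω ∂μ := lintegral_congr heq
      _ = ⨆ n, ∫⁻ ω, F n ω ∂μ := lintegral_iSup hFm hFmono
      _ ≤ 1 := iSup_le hFbd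
      _ < ⊤ := ENNReal.one_lt_top
  -- reformulated version hypotheses
  have hγ' : ∀ B : Set (𝒳 × ℳ), MeasurableSet B →
      ∫ ω in (fun ω => (X ω, M ω)) ⁻¹' B, {ω | S ω = true ∧ D ω = d}.indicator Y ω ∂μ
        = ∫ ω in (fun ω => (X ω, M ω)) ⁻¹' B,
            {ω | S ω = true ∧ D ω = d}.indicator (fun ω => γ₀ (X ω, M ω)) ω ∂μ := by
    intro B hB
    rw [setIntegral_indicator hAm, setIntegral_indicator hAm, Set.inter_comm, hγver B hB,
      Set.inter_comm]
  have hρ' : ∀ B : Set (𝒳 × ℳ), MeasurableSet B →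
      ∫ ω in (fun ω => (X ω, M ω)) ⁻¹' B,
          {ω | D ω = d}.indicator (fun ω => if S ω then (1 : ℝ) else 0) ω ∂μ
        = ∫ ω in (fun ω => (X ω, M ω)) ⁻¹' B,
            {ω | D ω = d}.indicator (fun ω => ρ₀ (X ω, M ω)) ω ∂μ := by
    intro B hB
    rw [setIntegral_indicator hAdm, setIntegral_indicator hAdm, Set.inter_comm, hρver B hB,
      Set.inter_comm]
  have hω' : ∀ B : Set 𝒳, MeasurableSet B →
      ∫ ω in X ⁻¹' B, {ω | D ω = d}.indicator (fun ω => γ₀ (X ω, M ω)) ω ∂μ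
        = ∫ ω in X ⁻¹' B, {ω | D ω = d}.indicator (fun ω => ω₀ (X ω)) ω ∂μ := by
    intro B hB
    rw [setIntegral_indicator hAdm, setIntegral_indicator hAdm, Set.inter_comm, hωver B hB,
      Set.inter_comm]
  -- the three key identities
  have S1 : ∫ ω, (1 / (π₀ (X ω) * ρ₀ (X ω, M ω))) * ({ω | S ω = true ∧ D ω = d}.indicator Y ω) ∂μ = ∫ ω, (1 / (π₀ (X ω) * ρ₀ (X ω, M ω))) * ({ω | S ω = true ∧ D ω = d}.indicator (fun ω => γ₀ (X ω, M ω)) ω) ∂μ :=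
    stmt19_key (φ := fun p => 1 / (π₀ p.1 * ρ₀ p)) hgm i1 i2 hγ'
      (measurable_const.div ((hπ₀.comp measurable_fst).mul hρ₀)) hφ2b
  have S2 : ∫ ω, ((γ₀ (X ω, M ω) - γ (X ω, M ω)) / (π₀ (X ω) * ρ₀ (X ω, M ω))) * ({ω | D ω = d}.indicator (fun ω => if S ω then (1 : ℝ) else 0) ω) ∂μ = ∫ ω, ((γ₀ (X ω, M ω) - γ (X ω, M ω)) / (π₀ (X ω) * ρ₀ (X ω, M ω))) * ({ω | D ω = d}.indicator (fun ω => ρ₀ (X ω, M ω)) ω) ∂μ :=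
    stmt19_key (φ := fun p => (γ₀ p - γ p) / (π₀ p.1 * ρ₀ p)) hgm i3 i4 hρ'
      ((hγ₀.sub hγ).div ((hπ₀.comp measurable_fst).mul hρ₀)) hφ1b
  have S3 : ∫ ω, (1 / π₀ (X ω)) * ({ω | D ω = d}.indicator (fun ω => γ₀ (X ω, M ω)) ω) ∂μ = ∫ ω, (1 / π₀ (X ω)) * ({ω | D ω = d}.indicator (fun ω => ω₀ (X ω)) ω) ∂μ :=
    stmt19_key (φ := fun x => 1 / π₀ x) hX i5 i6 hω' (measurable_const.div hπ₀) hφ3b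
  -- integrability of all product pieces
  have hmφ2 : Measurable (fun ω => 1 / (π₀ (X ω) * ρ₀ (X ω, M ω))) :=
    measurable_const.div ((hπ₀.comp hX).mul (hρ₀.comp hgm))
  have hmφ1 : Measurable (fun ω => (γ₀ (X ω, M ω) - γ (X ω, M ω)) / (π₀ (X ω) * ρ₀ (X ω, M ω))) :=
    ((hγ₀.comp hgm).sub (hγ.comp hgm)).div ((hπ₀.comp hX).mul (hρ₀.comp hgm))
  have habs_mul : ∀ (a b Ca Cb : ℝ), |a| ≤ Ca → |b| ≤ Cb → |a * b| ≤ Ca * Cb := by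
    intro a b Ca Cb ha hb
    rw [abs_mul]
    exact mul_le_mul ha hb (abs_nonneg _) ((abs_nonneg a).trans ha)
  have in1 : Integrable (fun ω => (1 / (π₀ (X ω) * ρ₀ (X ω, M ω))) * ({ω | S ω = true ∧ D ω = d}.indicator Y ω)) μ :=
    stmt19_int_of_bdd (hmφ2.mul (hY.indicator hAm))
      (fun ω => habs_mul _ _ _ _ (by simpa using hφ2b (X ω, M ω)) (habs_ind _ _ _ hYb ω))
  have in2 : Integrable (fun ω => (1 / (π₀ (X ω) * ρ₀ (X ω, M ω))) * ({ω | S ω = true ∧ D ω = d}.indicator (fun ω => γ₀ (X ω, M ω)) ω)) μ :=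
    stmt19_int_of_bdd (hmφ2.mul ((hγ₀.comp hgm).indicator hAm))
      (fun ω => habs_mul _ _ _ _ (by simpa using hφ2b (X ω, M ω))
        (habs_ind _ _ _ (fun ω => hγ₀b _) ω))
  have in3 : Integrable (fun ω => ((γ₀ (X ω, M ω) - γ (X ω, M ω)) / (π₀ (X ω) * ρ₀ (X ω, M ω))) * ({ω | D ω = d}.indicator (fun ω => if S ω then (1 : ℝ) else 0) ω)) μ :=
    stmt19_int_of_bdd (hmφ1.mul (hISm.indicator hAdm))
      (fun ω => habs_mul _ _ _ _ (by simpa using hφ1b (X ω, M ω)) (habs_ind _ _ _ hISb ω))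
  have in3r : Integrable (fun ω => ((γ₀ (X ω, M ω) - γ (X ω, M ω)) / (π₀ (X ω) * ρ₀ (X ω, M ω))) * ({ω | D ω = d}.indicator (fun ω => ρ₀ (X ω, M ω)) ω)) μ := by
    refine stmt19_int_of_bdd (hmφ1.mul ((hρ₀.comp hgm).indicator hAdm))
      (C := (Cγ₀ + Cγ) / ε) (fun ω => ?_)
    by_cases hω : ω ∈ {ω | D ω = d}
    · rw [Set.indicator_of_mem hω]
      have hc : (γ₀ (X ω, M ω) - γ (X ω, M ω)) / (π₀ (X ω) * ρ₀ (X ω, M ω)) * ρ₀ (X ω, M ω)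
          = (γ₀ (X ω, M ω) - γ (X ω, M ω)) / π₀ (X ω) := by
        rw [div_mul_eq_mul_div, mul_div_mul_right _ _ (hρpos (X ω, M ω)).ne']
      rw [hc, abs_div, abs_of_pos (hπpos _)]
      exact div_le_div₀ (by linarith [abs_nonneg (γ₀ (X ω, M ω) - γ (X ω, M ω))])
        ((abs_sub _ _).trans (add_le_add (hγ₀b _) (hγb _))) hε (hπε _)
    · rw [Set.indicator_of_notMem hω]
      rw [mul_zero, abs_zero]
      positivity
  have hb4 : ∀ ω, |(γ (X ω, M ω) - ω₀ (X ω)) / π₀ (X ω)| ≤ (Cγ + Cω₀) / ε := by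
    intro ω
    rw [abs_div, abs_of_pos (hπpos _)]
    exact div_le_div₀ (by linarith) ((abs_sub _ _).trans (add_le_add (hγb _) (hω₀b _))) hε (hπε _)
  have in4 : Integrable (fun ω => {ω | D ω = d}.indicator (fun ω => (γ (X ω, M ω) - ω₀ (X ω)) / π₀ (X ω)) ω) μ :=
    stmt19_int_of_bdd ((((hγ.comp hgm).sub (hω₀.comp hX)).div (hπ₀.comp hX)).indicator hAdm)
      (habs_ind _ _ _ hb4)
  have iω : Integrable (fun ω => ω₀ (X ω)) μ :=
    stmt19_int_of_bdd (hω₀.comp hX) (fun ω => hω₀b _)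
  have i5' : Integrable (fun ω => (1 / π₀ (X ω)) * ({ω | D ω = d}.indicator (fun ω => γ₀ (X ω, M ω)) ω)) μ :=
    stmt19_int_of_bdd ((measurable_const.div (hπ₀.comp hX)).mul ((hγ₀.comp hgm).indicator hAdm))
      (fun ω => habs_mul _ _ _ _ (hφ3b (X ω)) (habs_ind _ _ _ (fun ω => hγ₀b _) ω))
  have i6' : Integrable (fun ω => (1 / π₀ (X ω)) * ({ω | D ω = d}.indicator (fun ω => ω₀ (X ω)) ω)) μ :=
    stmt19_int_of_bdd ((measurable_const.div (hπ₀.comp hX)).mul ((hω₀.comp hX).indicator hAdm))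
      (fun ω => habs_mul _ _ _ _ (hφ3b (X ω)) (habs_ind _ _ _ (fun ω => hω₀b _) ω))
  -- the main pointwise rewriting of the integrand
  have hpt : ∀ ω, (ω₀ (X ω)
        + ((if D ω = d then (1 : ℝ) else 0) * (if S ω then (1 : ℝ) else 0)
            / (π₀ (X ω) * ρ₀ (X ω, M ω)))
          * ((if S ω then Y ω else 0) - γ (X ω, M ω))
        + ((if D ω = d then (1 : ℝ) else 0) / π₀ (X ω))
          * (γ (X ω, M ω) - ω₀ (X ω)))
      = ω₀ (X ω) + (((1 / (π₀ (X ω) * ρ₀ (X ω, M ω))) * ({ω | S ω = true ∧ D ω = d}.indicator Y ω) - (1 / (π₀ (X ω) * ρ₀ (X ω, M ω))) * ({ω | S ω = true ∧ D ω = d}.indicator (fun ω => γ₀ (X ω, M ω)) ω)) + ((γ₀ (X ω, M ω) - γ (X ω, M ω)) / (π₀ (X ω) * ρ₀ (X ω, M ω))) * ({ω | D ω = d}.indicator (fun ω => if S ω then (1 : ℝ) else 0) ω)) + {ω | D ω = d}.indicator (fun ω => (γ (X ω, M ω) - ω₀ (X ω)) / π₀ (X ω)) ω := by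
    intro ω
    have hπne : π₀ (X ω) ≠ 0 := (hπpos (X ω)).ne'
    have hρne : ρ₀ (X ω, M ω) ≠ 0 := (hρpos (X ω, M ω)).ne'
    by_cases hd : D ω = d <;> by_cases hs : S ω = true <;>
        simp only [Set.indicator_apply, Set.mem_setOf_eq, hd, hs, and_self, and_true, true_and,
          and_false, false_and, Bool.false_eq_true, if_true, if_false, ite_true, ite_false] <;>
        (try field_simp) <;> (try ring)
  have hpt2 : ∀ ω, ((γ₀ (X ω, M ω) - γ (X ω, M ω)) / (π₀ (X ω) * ρ₀ (X ω, M ω))) * ({ω | D ω = d}.indicator (fun ω => ρ₀ (X ω, M ω)) ω) + {ω | D ω = d}.indicator (fun ω => (γ (X ω, M ω) - ω₀ (X ω)) / π₀ (X ω)) ω = (1 / π₀ (X ω)) * ({ω | D ω = d}.indicator (fun ω => γ₀ (X ω, M ω)) ω) - (1 / π₀ (X ω)) * ({ω | D ω = d}.indicator (fun ω => ω₀ (X ω)) ω) := by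
    intro ω
    have hπne : π₀ (X ω) ≠ 0 := (hπpos (X ω)).ne'
    have hρne : ρ₀ (X ω, M ω) ≠ 0 := (hρpos (X ω, M ω)).ne'
    by_cases hd : D ω = d <;>
        simp only [Set.indicator_apply, Set.mem_setOf_eq, hd, if_true, if_false, ite_true,
          ite_false] <;>
        (try field_simp) <;> (try ring)
  have key0 : (∫ ω, ((γ₀ (X ω, M ω) - γ (X ω, M ω)) / (π₀ (X ω) * ρ₀ (X ω, M ω))) * ({ω | D ω = d}.indicator (fun ω => if S ω then (1 : ℝ) else 0) ω) ∂μ) + (∫ ω, {ω | D ω = d}.indicator (fun ω => (γ (X ω, M ω) - ω₀ (X ω)) / π₀ (X ω)) ω ∂μ) = 0 := by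
    calc (∫ ω, ((γ₀ (X ω, M ω) - γ (X ω, M ω)) / (π₀ (X ω) * ρ₀ (X ω, M ω))) * ({ω | D ω = d}.indicator (fun ω => if S ω then (1 : ℝ) else 0) ω) ∂μ) + (∫ ω, {ω | D ω = d}.indicator (fun ω => (γ (X ω, M ω) - ω₀ (X ω)) / π₀ (X ω)) ω ∂μ)
        = (∫ ω, ((γ₀ (X ω, M ω) - γ (X ω, M ω)) / (π₀ (X ω) * ρ₀ (X ω, M ω))) * ({ω | D ω = d}.indicator (fun ω => ρ₀ (X ω, M ω)) ω) ∂μ) + (∫ ω, {ω | D ω = d}.indicator (fun ω => (γ (X ω, M ω) - ω₀ (X ω)) / π₀ (X ω)) ω ∂μ) := by rw [S2]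
      _ = ∫ ω, ((γ₀ (X ω, M ω) - γ (X ω, M ω)) / (π₀ (X ω) * ρ₀ (X ω, M ω))) * ({ω | D ω = d}.indicator (fun ω => ρ₀ (X ω, M ω)) ω) + {ω | D ω = d}.indicator (fun ω => (γ (X ω, M ω) - ω₀ (X ω)) / π₀ (X ω)) ω ∂μ := (integral_add in3r in4).symm
      _ = ∫ ω, (1 / π₀ (X ω)) * ({ω | D ω = d}.indicator (fun ω => γ₀ (X ω, M ω)) ω) - (1 / π₀ (X ω)) * ({ω | D ω = d}.indicator (fun ω => ω₀ (X ω)) ω) ∂μ := integral_congr_ae (Filter.Eventually.of_forall hpt2)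
      _ = (∫ ω, (1 / π₀ (X ω)) * ({ω | D ω = d}.indicator (fun ω => γ₀ (X ω, M ω)) ω) ∂μ) - (∫ ω, (1 / π₀ (X ω)) * ({ω | D ω = d}.indicator (fun ω => ω₀ (X ω)) ω) ∂μ) := integral_sub i5' i6'
      _ = 0 := by rw [S3, sub_self]
  have jsub : Integrable (fun ω => (1 / (π₀ (X ω) * ρ₀ (X ω, M ω))) * ({ω | S ω = true ∧ D ω = d}.indicator Y ω) - (1 / (π₀ (X ω) * ρ₀ (X ω, M ω))) * ({ω | S ω = true ∧ D ω = d}.indicator (fun ω => γ₀ (X ω, M ω)) ω)) μ := in1.sub in2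
  have j2 : Integrable (fun ω => ((1 / (π₀ (X ω) * ρ₀ (X ω, M ω))) * ({ω | S ω = true ∧ D ω = d}.indicator Y ω) - (1 / (π₀ (X ω) * ρ₀ (X ω, M ω))) * ({ω | S ω = true ∧ D ω = d}.indicator (fun ω => γ₀ (X ω, M ω)) ω)) + ((γ₀ (X ω, M ω) - γ (X ω, M ω)) / (π₀ (X ω) * ρ₀ (X ω, M ω))) * ({ω | D ω = d}.indicator (fun ω => if S ω then (1 : ℝ) else 0) ω)) μ := jsub.add in3
  have j1 : Integrable (fun ω => ω₀ (X ω) + (((1 / (π₀ (X ω) * ρ₀ (X ω, M ω))) * ({ω | S ω = true ∧ D ω = d}.indicator Y ω) - (1 / (π₀ (X ω) * ρ₀ (X ω, M ω))) * ({ω | S ω = true ∧ D ω = d}.indicator (fun ω => γ₀ (X ω, M ω)) ω)) + ((γ₀ (X ω, M ω) - γ (X ω, M ω)) / (π₀ (X ω) * ρ₀ (X ω, M ω))) * ({ω | D ω = d}.indicator (fun ω => if S ω then (1 : ℝ) else 0) ω))) μ := iω.add j2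
  refine Eq.trans (integral_congr_ae (Filter.Eventually.of_forall hpt)) ?_
  rw [integral_add j1 in4, integral_add iω j2, integral_add jsub in3,
    integral_sub in1 in2]
  linarith [S1, key0]
end
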